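/- arXiv:1808.05731 — 3 statements merged into one kernel-verified Lean document; each statement's English description precedes it below -/
import Mathlib

section
/- Let k ≥ 1, let 0 < μ ≤ 1/(40k²), let n ≥ 40k², and set λ = 2μ/n. Then for every integer i with 1 ≤ i ≤ 2k, the probability that the Mallows model M(iλ, π) generates its own center permutation π satisfies 1 − 2iμ ≤ Pr_{M(iλ, π)}[π] ≤ 1 − (2i−1)μ. -/
open Finset

/-- Number of inversions of a permutation of `Fin n`. -/
def numInv {n : ℕ} (τ : Equiv.Perm (Fin n)) : ℕ :=
  (Finset.univ.filter fun p : Fin n × Fin n => p.1 < p.2 ∧ τ p.2 < τ p.1).card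

/-- Kendall-Tau distance between two permutations of `Fin n`. -/
def dKT {n : ℕ} (π π' : Equiv.Perm (Fin n)) : ℕ :=
  (Finset.univ.filter fun p : Fin n × Fin n =>
    p.1 < p.2 ∧ ¬((π p.1 < π p.2) ↔ (π' p.1 < π' p.2))).card

/-- The Mallows model probability of `σ`, with scaling parameter `φ` and center `c`. -/
noncomputable def mallows {n : ℕ} (φ : ℝ) (c : Equiv.Perm (Fin n)) (σ : Equiv.Perm (Fin n)) : ℝ :=
  φ ^ dKT c σ / ∑ τ : Equiv.Perm (Fin n), φ ^ dKT c τ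

/-- Total variation distance. -/
noncomputable def dTV {n : ℕ} (P Q : Equiv.Perm (Fin n) → ℝ) : ℝ :=
  (∑ σ : Equiv.Perm (Fin n), |P σ - Q σ|) / 2

lemma dKT_self {n : ℕ} (π : Equiv.Perm (Fin n)) : dKT π π = 0 := by
  simp [dKT]

lemma dKT_mul {n : ℕ} (π τ : Equiv.Perm (Fin n)) : dKT π (τ * π) = numInv τ := by
  rw [dKT, numInv]
  refine Finset.card_bij'
    (fun p _ => if π p.1 < π p.2 then (π p.1, π p.2) else (π p.2, π p.1))
    (fun q _ => if π.symm q.1 < π.symm q.2 then (π.symm q.1, π.symm q.2) else (π.symm q.2, π.symm q.1))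
    ?_ ?_ ?_ ?_
  · rintro ⟨p1, p2⟩ hp
    rw [Finset.mem_filter] at hp
    simp only [Finset.mem_filter, Finset.mem_univ, true_and, Equiv.Perm.mul_apply] at hp
    obtain ⟨h12, hne⟩ := hp
    have hne' : π p1 ≠ π p2 := fun h => absurd (π.injective h) h12.ne
    have hne2 : τ (π p1) ≠ τ (π p2) := fun hc => hne' (τ.injective hc)
    by_cases h : π p1 < π p2
    · simp only [if_pos h, Finset.mem_filter, Finset.mem_univ, true_and]
      have h2 : ¬ τ (π p1) < τ (π p2) := fun hc => hne ⟨fun _ => hc, fun _ => h⟩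
      exact ⟨h, hne2.lt_or_gt.resolve_left h2⟩
    · simp only [if_neg h, Finset.mem_filter, Finset.mem_univ, true_and]
      have h2 : τ (π p1) < τ (π p2) := by
        rcases hne2.lt_or_gt with hc | hc
        · exact hc
        · exact absurd ⟨fun hl => absurd hl h, fun hl => absurd hl (asymm hc)⟩ hne
      exact ⟨hne'.lt_or_gt.resolve_left h, h2⟩
  · rintro ⟨q1, q2⟩ hq
    simp only [Finset.mem_filter, Finset.mem_univ, true_and] at hq
    obtain ⟨h12, hτ⟩ := hq
    have hne' : π.symm q1 ≠ π.symm q2 := fun h => absurd (π.symm.injective h) h12.ne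
    by_cases h : π.symm q1 < π.symm q2
    · rw [if_pos h, Finset.mem_filter]
      simp only [if_pos h, Finset.mem_filter, Finset.mem_univ, true_and, Equiv.Perm.mul_apply,
        Equiv.apply_symm_apply]
      exact ⟨h, fun hiff => absurd (hiff.mp h12) (asymm hτ)⟩
    · rw [if_neg h, Finset.mem_filter]
      simp only [if_neg h, Finset.mem_filter, Finset.mem_univ, true_and, Equiv.Perm.mul_apply,
        Equiv.apply_symm_apply]
      exact ⟨hne'.lt_or_gt.resolve_left h, fun hiff => absurd (hiff.mpr hτ) (asymm h12)⟩
  · rintro ⟨p1, p2⟩ hp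
    simp only [Finset.mem_filter, Finset.mem_univ, true_and] at hp
    obtain ⟨h12, -⟩ := hp
    by_cases h : π p1 < π p2
    · simp [if_pos h, h12]
    · simp only [if_neg h]
      have : ¬ π.symm (π p2) < π.symm (π p1) := by
        simp only [Equiv.symm_apply_apply]; exact asymm h12
      simp [if_neg this]
      exact fun hc => absurd hc (asymm h12)
  · rintro ⟨q1, q2⟩ hq
    simp only [Finset.mem_filter, Finset.mem_univ, true_and] at hq
    obtain ⟨h12, -⟩ := hq
    by_cases h : π.symm q1 < π.symm q2
    · simp [if_pos h, h12]
    · simp only [if_neg h]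
      have : ¬ π (π.symm q2) < π (π.symm q1) := by
        simp only [Equiv.apply_symm_apply]; exact asymm h12
      simp [if_neg this]
      exact fun hc => absurd hc (asymm h12)

lemma numInv_swap {n : ℕ} (x y : Fin n) (hxy : x < y)
    (hadj : ∀ z : Fin n, ¬(x < z ∧ z < y)) : numInv (Equiv.swap x y) = 1 := by
  have key : (Finset.univ.filter fun p : Fin n × Fin n =>
      p.1 < p.2 ∧ (Equiv.swap x y) p.2 < (Equiv.swap x y) p.1) = {(x, y)} := by
    ext ⟨p1, p2⟩
    simp only [Finset.mem_filter, Finset.mem_univ, true_and, Finset.mem_singleton, Prod.mk.injEq]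
    constructor
    · rintro ⟨h12, hs⟩
      by_cases h1x : p1 = x
      · subst h1x
        rw [Equiv.swap_apply_left] at hs
        by_cases h2y : p2 = y
        · exact ⟨rfl, h2y⟩
        · rw [Equiv.swap_apply_of_ne_of_ne h12.ne' h2y] at hs
          exact absurd ⟨h12, hs⟩ (hadj p2)
      · by_cases h1y : p1 = y
        · subst h1y
          rw [Equiv.swap_apply_right] at hs
          have h2x : p2 ≠ x := by
            intro h; rw [h] at h12; exact absurd (hxy.trans h12) (lt_irrefl x)
          rw [Equiv.swap_apply_of_ne_of_ne h2x h12.ne'] at hs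
          exact absurd ((hxy.trans h12).trans hs) (lt_irrefl x)
        · rw [Equiv.swap_apply_of_ne_of_ne h1x h1y] at hs
          by_cases h2x : p2 = x
          · subst h2x
            rw [Equiv.swap_apply_left] at hs
            exact absurd (hxy.trans (hs.trans h12)) (lt_irrefl _)
          · by_cases h2y : p2 = y
            · subst h2y
              rw [Equiv.swap_apply_right] at hs
              exact absurd ⟨hs, h12⟩ (hadj p1)
            · rw [Equiv.swap_apply_of_ne_of_ne h2x h2y] at hs
              exact absurd (h12.trans hs) (lt_irrefl _)
    · rintro ⟨rfl, rfl⟩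
      refine ⟨hxy, ?_⟩
      rw [Equiv.swap_apply_left, Equiv.swap_apply_right]
      exact hxy
  rw [numInv, key, Finset.card_singleton]

lemma numInv_one {n : ℕ} : numInv (1 : Equiv.Perm (Fin n)) = 0 := by
  rw [numInv, Finset.card_eq_zero, Finset.filter_eq_empty_iff]
  rintro ⟨p1, p2⟩ -
  simp only [Equiv.Perm.one_apply, not_and]
  exact fun h => asymm h

/-- Lehmer-type code: number of later positions with smaller value. -/
def lcode {n : ℕ} (τ : Equiv.Perm (Fin n)) (j : Fin n) : ℕ :=
  (Finset.univ.filter fun i : Fin n => j < i ∧ τ i < τ j).card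

lemma sum_lcode {n : ℕ} (τ : Equiv.Perm (Fin n)) : ∑ j, lcode τ j = numInv τ := by
  rw [numInv, Finset.card_filter, Fintype.sum_prod_type]
  refine Finset.sum_congr rfl fun j _ => ?_
  rw [lcode, Finset.card_filter]

lemma lcode_lt {n : ℕ} (τ : Equiv.Perm (Fin n)) (j : Fin n) : lcode τ j < n := by
  have hsub : (Finset.univ.filter fun i : Fin n => j < i ∧ τ i < τ j) ⊆ Finset.univ.erase j := by
    intro i hi
    simp only [Finset.mem_filter] at hi
    exact Finset.mem_erase.mpr ⟨(hi.2.1).ne', Finset.mem_univ i⟩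
  calc lcode τ j ≤ (Finset.univ.erase j).card := Finset.card_le_card hsub
    _ < Finset.univ.card := Finset.card_erase_lt_of_mem (Finset.mem_univ j)
    _ = n := by simp

lemma card_lt_val {n : ℕ} (τ : Equiv.Perm (Fin n)) (j : Fin n) :
    (Finset.univ.filter fun i : Fin n => τ i < τ j).card = (τ j : ℕ) := by
  have : (Finset.univ.filter fun i : Fin n => τ i < τ j)
      = (Finset.Iio (τ j)).map τ.symm.toEmbedding := by
    ext i
    simp only [Finset.mem_filter, Finset.mem_univ, true_and, Finset.mem_map,
      Finset.mem_Iio, Equiv.coe_toEmbedding]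
    constructor
    · intro h; exact ⟨τ i, h, τ.symm_apply_apply i⟩
    · rintro ⟨v, hv, rfl⟩; rwa [τ.apply_symm_apply]
  rw [this, Finset.card_map, Fin.card_Iio]

lemma val_eq_lcode_add {n : ℕ} (τ : Equiv.Perm (Fin n)) (j : Fin n) :
    (τ j : ℕ) = lcode τ j + (Finset.univ.filter fun i : Fin n => i < j ∧ τ i < τ j).card := by
  have hsplit : (Finset.univ.filter fun i : Fin n => τ i < τ j)
      = (Finset.univ.filter fun i : Fin n => j < i ∧ τ i < τ j)
        ∪ (Finset.univ.filter fun i : Fin n => i < j ∧ τ i < τ j) := by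
    ext i
    simp only [Finset.mem_filter, Finset.mem_univ, true_and, Finset.mem_union]
    constructor
    · intro h
      rcases lt_trichotomy j i with hc | hc | hc
      · exact Or.inl ⟨hc, h⟩
      · exact absurd (hc ▸ h) (lt_irrefl _)
      · exact Or.inr ⟨hc, h⟩
    · rintro (⟨-, h⟩ | ⟨-, h⟩) <;> exact h
  have hdisj : Disjoint (Finset.univ.filter fun i : Fin n => j < i ∧ τ i < τ j)
      (Finset.univ.filter fun i : Fin n => i < j ∧ τ i < τ j) := by
    rw [Finset.disjoint_left]
    intro i h1 h2
    simp only [Finset.mem_filter] at h1 h2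
    exact absurd (h1.2.1.trans h2.2.1) (lt_irrefl _)
  rw [← card_lt_val τ j, hsplit, Finset.card_union_of_disjoint hdisj, lcode]

lemma lcode_injective {n : ℕ} : Function.Injective (fun τ : Equiv.Perm (Fin n) => lcode τ) := by
  intro τ τ' h
  have key : ∀ j : Fin n, ∀ σ σ' : Equiv.Perm (Fin n), lcode σ = lcode σ' →
      (∀ i, i < j → σ i = σ' i) → ¬ (σ j < σ' j) := by
    intro j σ σ' hc hlt hlt'
    have hA : (Finset.univ.filter fun i : Fin n => i < j ∧ σ i < σ j)
        ⊆ (Finset.univ.filter fun i : Fin n => i < j ∧ σ' i < σ' j) := by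
      intro i hi
      simp only [Finset.mem_filter, Finset.mem_univ, true_and] at hi ⊢
      exact ⟨hi.1, (hlt i hi.1 ▸ hi.2).trans hlt'⟩
    have hdiff : ((Finset.univ.filter fun i : Fin n => i < j ∧ σ' i < σ' j)
        \ (Finset.univ.filter fun i : Fin n => i < j ∧ σ i < σ j)).card
        ≤ (Finset.Ioo (σ j) (σ' j)).card := by
      apply Finset.card_le_card_of_injOn (fun i => σ i)
      · intro i hi
        simp only [Finset.mem_coe, Finset.mem_sdiff, Finset.mem_filter, Finset.mem_univ, true_and,
          not_and] at hi
        obtain ⟨⟨hij, hσ'⟩, hns⟩ := hi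
        have h1 : ¬ σ i < σ j := fun hc' => hns hij hc'
        have hne : σ i ≠ σ j := fun hc' => absurd (σ.injective hc') hij.ne
        rw [Finset.mem_coe, Finset.mem_Ioo]
        refine ⟨hne.lt_or_gt.resolve_left h1, ?_⟩
        show σ i < σ' j
        rw [hlt i hij] at hne h1 ⊢
        exact hσ'
      · intro a _ b _ hab
        exact σ.injective hab
    have hcard : (Finset.univ.filter fun i : Fin n => i < j ∧ σ' i < σ' j).card
        = (Finset.univ.filter fun i : Fin n => i < j ∧ σ i < σ j).card
          + ((Finset.univ.filter fun i : Fin n => i < j ∧ σ' i < σ' j)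
            \ (Finset.univ.filter fun i : Fin n => i < j ∧ σ i < σ j)).card := by
      have := Finset.card_le_card hA
      rw [Finset.card_sdiff_of_subset hA]
      omega
    have e1 := val_eq_lcode_add σ j
    have e2 := val_eq_lcode_add σ' j
    have e3 : lcode σ j = lcode σ' j := congrFun hc j
    have e4 : (Finset.Ioo (σ j) (σ' j)).card = (σ' j : ℕ) - (σ j : ℕ) - 1 := Fin.card_Ioo _ _
    have e5 : (σ j : ℕ) < (σ' j : ℕ) := hlt'
    omega
  have hj : ∀ m : ℕ, ∀ hm : m < n, τ ⟨m, hm⟩ = τ' ⟨m, hm⟩ := by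
    intro m
    induction m using Nat.strong_induction_on with
    | _ m ih =>
      intro hm
      have hlt : ∀ i : Fin n, i < ⟨m, hm⟩ → τ i = τ' i := by
        intro i hi
        have := ih i.1 hi i.isLt
        simpa using this
      rcases lt_trichotomy (τ ⟨m, hm⟩) (τ' ⟨m, hm⟩) with hc | hc | hc
      · exact absurd hc (key ⟨m, hm⟩ τ τ' h hlt)
      · exact hc
      · exact absurd hc (key ⟨m, hm⟩ τ' τ h.symm fun i hi => (hlt i hi).symm)
  exact Equiv.ext fun j => by simpa using hj j.1 j.isLt

lemma Z_upper {n : ℕ} (φ : ℝ) (hφ0 : 0 ≤ φ) (hφ1 : φ < 1) :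
    ∑ τ : Equiv.Perm (Fin n), φ ^ numInv τ ≤ (1 / (1 - φ)) ^ n := by
  have h1φ : 0 < 1 - φ := by linarith
  have step1 : ∀ τ : Equiv.Perm (Fin n), φ ^ numInv τ = ∏ j : Fin n, φ ^ lcode τ j := by
    intro τ
    rw [← sum_lcode τ, ← Finset.prod_pow_eq_pow_sum]
  set F : Equiv.Perm (Fin n) → (Fin n → Fin n) := fun τ j => ⟨lcode τ j, lcode_lt τ j⟩ with hF
  have hFinj : Function.Injective F := by
    intro τ τ' hττ'
    apply lcode_injective
    funext j
    have := congrFun hττ' j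
    simpa [hF, Fin.ext_iff] using this
  have step2 : ∑ τ : Equiv.Perm (Fin n), φ ^ numInv τ
      ≤ ∑ f : Fin n → Fin n, ∏ j : Fin n, φ ^ (f j : ℕ) := by
    calc ∑ τ : Equiv.Perm (Fin n), φ ^ numInv τ
        = ∑ τ : Equiv.Perm (Fin n), ∏ j : Fin n, φ ^ ((F τ) j : ℕ) := by
          refine Finset.sum_congr rfl fun τ _ => ?_
          rw [step1 τ]
      _ = ∑ f ∈ Finset.univ.image F, ∏ j : Fin n, φ ^ (f j : ℕ) := by
          rw [Finset.sum_image (fun x _ y _ h => hFinj h)]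
      _ ≤ ∑ f : Fin n → Fin n, ∏ j : Fin n, φ ^ (f j : ℕ) := by
          apply Finset.sum_le_sum_of_subset_of_nonneg (Finset.subset_univ _)
          intro f _ _
          exact Finset.prod_nonneg fun j _ => pow_nonneg hφ0 _
  have step3 : ∑ f : Fin n → Fin n, ∏ j : Fin n, φ ^ (f j : ℕ)
      = ∏ _j : Fin n, ∑ v : Fin n, φ ^ (v : ℕ) := by
    rw [Finset.prod_univ_sum (fun _ => (Finset.univ : Finset (Fin n))) (fun _ v => φ ^ (v : ℕ)),
      Fintype.piFinset_univ]
  have step4 : ∑ v : Fin n, φ ^ (v : ℕ) ≤ 1 / (1 - φ) := by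
    rw [Fin.sum_univ_eq_sum_range]
    rw [le_div_iff₀ h1φ]
    have hg := geom_sum_mul φ n
    nlinarith [pow_nonneg hφ0 n]
  calc ∑ τ : Equiv.Perm (Fin n), φ ^ numInv τ
      ≤ ∏ _j : Fin n, ∑ v : Fin n, φ ^ (v : ℕ) := step3 ▸ step2
    _ ≤ ∏ _j : Fin n, (1 / (1 - φ)) := by
        refine Finset.prod_le_prod (fun j _ => ?_) (fun j _ => step4)
        exact Finset.sum_nonneg fun v _ => pow_nonneg hφ0 _
    _ = (1 / (1 - φ)) ^ n := by
        rw [Finset.prod_const, Finset.card_univ, Fintype.card_fin]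

lemma Z_lower {m : ℕ} (φ : ℝ) (hφ0 : 0 ≤ φ) :
    1 + m * φ ≤ ∑ τ : Equiv.Perm (Fin (m + 1)), φ ^ numInv τ := by
  set f : Fin m → Equiv.Perm (Fin (m + 1)) := fun a => Equiv.swap a.castSucc a.succ with hf
  have hnum : ∀ a : Fin m, numInv (f a) = 1 := by
    intro a
    refine numInv_swap _ _ (Fin.castSucc_lt_succ : a.castSucc < a.succ) fun z hz => ?_
    obtain ⟨h1, h2⟩ := hz
    rw [Fin.lt_def] at h1 h2
    simp only [Fin.coe_castSucc, Fin.val_succ] at h1 h2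
    omega
  have hinj : ∀ a ∈ Finset.univ, ∀ b ∈ Finset.univ, f a = f b → a = b := by
    intro a _ b _ hab
    have h1 : f a b.castSucc = b.succ := by rw [hab, hf]; exact Equiv.swap_apply_left _ _
    rw [hf] at h1
    simp only [Equiv.swap_apply_def] at h1
    split_ifs at h1 with h2 h3
    · exact (Fin.castSucc_injective _ h2).symm
    · rw [Fin.ext_iff] at h1 h2 h3 ⊢
      simp only [Fin.coe_castSucc, Fin.val_succ] at *
      omega
    · rw [Fin.ext_iff] at h1
      simp only [Fin.coe_castSucc, Fin.val_succ] at h1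
      omega
  have h1notin : (1 : Equiv.Perm (Fin (m + 1))) ∉ Finset.univ.image f := by
    rw [Finset.mem_image]
    rintro ⟨a, -, ha⟩
    have : f a a.castSucc = a.castSucc := by rw [ha]; rfl
    rw [hf] at this
    have h2 : (Equiv.swap a.castSucc a.succ) a.castSucc = a.succ := Equiv.swap_apply_left _ _
    rw [this] at h2
    rw [Fin.ext_iff] at h2
    simp only [Fin.coe_castSucc, Fin.val_succ] at h2
    omega
  have hsum : ∑ τ ∈ insert 1 (Finset.univ.image f), φ ^ numInv τ = 1 + m * φ := by
    rw [Finset.sum_insert h1notin, Finset.sum_image hinj, numInv_one, pow_zero]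
    have : ∀ a : Fin m, φ ^ numInv (f a) = φ := by
      intro a; rw [hnum a, pow_one]
    rw [Finset.sum_congr rfl fun a _ => this a, Finset.sum_const, Finset.card_univ,
      Fintype.card_fin, nsmul_eq_mul]
  rw [← hsum]
  exact Finset.sum_le_sum_of_subset_of_nonneg (Finset.subset_univ _)
    fun τ _ _ => pow_nonneg hφ0 _

/-- **Claim inside Lemma 6.1 of Liu–Moitra.** Let `k ≥ 1`, `0 < μ ≤ 1/(40k²)`,
`n ≥ 40k²` and set `λ = 2μ/n`. Then for every `1 ≤ i ≤ 2k`, the probability that the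
Mallows model `M(iλ, π)` generates its own center satisfies
`1 - 2iμ ≤ Pr_{M(iλ, π)}[π] ≤ 1 - (2i-1)μ`. -/
theorem center_probability_bounds (n k : ℕ) (hk : 1 ≤ k) (μ : ℝ) (hμ0 : 0 < μ)
    (hμ : μ ≤ 1 / (40 * (k : ℝ) ^ 2)) (hn : 40 * k ^ 2 ≤ n)
    (π : Equiv.Perm (Fin n)) (i : ℕ) (hi1 : 1 ≤ i) (hi2 : i ≤ 2 * k) :
    1 - 2 * (i : ℝ) * μ ≤ mallows ((i : ℝ) * (2 * μ / n)) π π ∧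
      mallows ((i : ℝ) * (2 * μ / n)) π π ≤ 1 - (2 * (i : ℝ) - 1) * μ := by
  have hn0 : 0 < n := by
    have h1 : 1 ≤ k ^ 2 := Nat.one_le_pow _ _ hk
    omega
  obtain ⟨m, rfl⟩ := Nat.exists_eq_succ_of_ne_zero hn0.ne'
  set N : ℝ := ((m + 1 : ℕ) : ℝ) with hNdef
  set φ : ℝ := (i : ℝ) * (2 * μ / N) with hφdef
  have hK : (1 : ℝ) ≤ (k : ℝ) := by exact_mod_cast hk
  have hI1 : (1 : ℝ) ≤ (i : ℝ) := by exact_mod_cast hi1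
  have hI2 : (i : ℝ) ≤ 2 * (k : ℝ) := by exact_mod_cast hi2
  have hN : 40 * (k : ℝ) ^ 2 ≤ N := by rw [hNdef]; exact_mod_cast hn
  have hkk : (k : ℝ) ≤ (k : ℝ) ^ 2 := by nlinarith
  have hN40 : (40 : ℝ) ≤ N := by nlinarith
  have hNpos : (0 : ℝ) < N := by linarith
  have hμ' : μ * (40 * (k : ℝ) ^ 2) ≤ 1 := by
    rw [← le_div_iff₀ (by positivity)]
    exact hμ
  have hφpos : 0 < φ := by
    rw [hφdef]
    apply mul_pos (by linarith) (by positivity)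
  have hNφ : N * φ = 2 * (i : ℝ) * μ := by
    rw [hφdef]; field_simp
  have h2iμ : 2 * (i : ℝ) * μ ≤ 1 / 10 := by
    have ha : (i : ℝ) * μ ≤ 2 * (k : ℝ) * μ := mul_le_mul_of_nonneg_right hI2 hμ0.le
    have hb : (k : ℝ) * μ ≤ (k : ℝ) ^ 2 * μ := mul_le_mul_of_nonneg_right hkk hμ0.le
    linarith
  have hφ40 : 40 * φ ≤ 2 * (i : ℝ) * μ := by
    have := mul_le_mul_of_nonneg_right hN40 hφpos.le
    linarith [hNφ]
  have hφ1 : φ < 1 := by linarith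
  have h20i : 20 * (i : ℝ) ≤ N := by linarith
  have hφμ : 10 * φ ≤ μ := by
    have h1 : 20 * (i : ℝ) * φ ≤ 2 * (i : ℝ) * μ := by
      have := mul_le_mul_of_nonneg_right h20i hφpos.le
      linarith [hNφ]
    have h1' : (2 * (i : ℝ)) * (10 * φ) ≤ (2 * (i : ℝ)) * μ := by linarith
    exact le_of_mul_le_mul_left h1' (by linarith)
  have h4i2μ : 4 * (i : ℝ) ^ 2 * μ ≤ 2 / 5 := by
    have hii : (i : ℝ) ^ 2 ≤ 4 * (k : ℝ) ^ 2 := by nlinarith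
    have := mul_le_mul_of_nonneg_right hii hμ0.le
    linarith
  have hM : ((m : ℕ) : ℝ) = N - 1 := by rw [hNdef]; push_cast; ring
  have hbern : 1 - 2 * (i : ℝ) * μ ≤ (1 - φ) ^ (m + 1) := by
    have hb := one_add_mul_le_pow (show (-2 : ℝ) ≤ -φ by linarith) (m + 1)
    have hcast : ((m + 1 : ℕ) : ℝ) = N := rfl
    rw [hcast] at hb
    have h1 : (1 : ℝ) + N * (-φ) = 1 - 2 * (i : ℝ) * μ := by rw [← hNφ]; ring
    rw [h1] at hb
    have h1φ' : (1 : ℝ) + -φ = 1 - φ := by ring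
    rwa [h1φ'] at hb
  have hNm : (N - 1) * φ = 2 * (i : ℝ) * μ - φ := by
    rw [sub_mul, hNφ, one_mul]
  have key : 1 ≤ (1 - (2 * (i : ℝ) - 1) * μ) * (1 + (m : ℕ) * φ) := by
    rw [hM, hNm]
    have c1 : 0 ≤ 2 * (i : ℝ) * μ - φ := by linarith
    have c2 : (2 * (i : ℝ) - 1) * μ ≤ 2 * (i : ℝ) * μ := by linarith [hμ0.le]
    have c3 : 0 ≤ (2 * (i : ℝ) - 1) * μ := mul_nonneg (by linarith) hμ0.le
    have hb1 : (2 * (i : ℝ) - 1) * μ * (2 * (i : ℝ) * μ - φ)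
        ≤ (2 * (i : ℝ) * μ) * (2 * (i : ℝ) * μ) :=
      mul_le_mul c2 (by linarith) c1 (by positivity)
    have hb2 : (2 * (i : ℝ) * μ) * (2 * (i : ℝ) * μ) = 4 * (i : ℝ) ^ 2 * μ * μ := by ring
    have hb3 : 4 * (i : ℝ) ^ 2 * μ * μ ≤ (2 / 5) * μ :=
      mul_le_mul_of_nonneg_right h4i2μ hμ0.le
    have hexp : (1 - (2 * (i : ℝ) - 1) * μ) * (1 + (2 * (i : ℝ) * μ - φ))
        = 1 + (2 * (i : ℝ) * μ - φ) - (2 * (i : ℝ) - 1) * μ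
          - (2 * (i : ℝ) - 1) * μ * (2 * (i : ℝ) * μ - φ) := by ring
    rw [hexp]
    linarith [hb1, hb2 ▸ hb1, hb3, hφμ]
  rw [mallows, dKT_self, pow_zero]
  have hZeq : (∑ τ : Equiv.Perm (Fin (m + 1)), φ ^ dKT π τ)
      = ∑ τ : Equiv.Perm (Fin (m + 1)), φ ^ numInv τ := by
    rw [← Equiv.sum_comp (Equiv.mulRight π) (fun σ => φ ^ dKT π σ)]
    exact Finset.sum_congr rfl fun τ _ => by
      simp only [Equiv.coe_mulRight, dKT_mul]
  rw [hZeq]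
  set Z : ℝ := ∑ τ : Equiv.Perm (Fin (m + 1)), φ ^ numInv τ with hZ
  have hZlow : 1 + m * φ ≤ Z := Z_lower φ hφpos.le
  have hmφ : 0 ≤ (m : ℝ) * φ := by positivity
  have hZpos : 0 < Z := by linarith
  have hZup : Z ≤ (1 / (1 - φ)) ^ (m + 1) := Z_upper φ hφpos.le hφ1
  constructor
  · have hpow : (1 - φ) ^ (m + 1) * Z ≤ 1 := by
      have h2 : (1 - φ) ^ (m + 1) * Z ≤ (1 - φ) ^ (m + 1) * (1 / (1 - φ)) ^ (m + 1) :=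
        mul_le_mul_of_nonneg_left hZup (pow_nonneg (by linarith) _)
      have h3 : (1 - φ) ^ (m + 1) * (1 / (1 - φ)) ^ (m + 1) = 1 := by
        rw [← mul_pow, mul_one_div, div_self (by linarith : (1 : ℝ) - φ ≠ 0), one_pow]
      linarith
    rw [le_div_iff₀ hZpos]
    calc (1 - 2 * (i : ℝ) * μ) * Z ≤ (1 - φ) ^ (m + 1) * Z :=
          mul_le_mul_of_nonneg_right hbern hZpos.le
      _ ≤ 1 := hpow
  · have h2 : 1 / (1 + (m : ℕ) * φ) ≤ 1 - (2 * (i : ℝ) - 1) * μ := by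
      rw [div_le_iff₀ (by linarith : (0 : ℝ) < 1 + (m : ℕ) * φ)]
      linarith [key]
    calc 1 / Z ≤ 1 / (1 + (m : ℕ) * φ) :=
          one_div_le_one_div_of_le (by linarith) hZlow
      _ ≤ 1 - (2 * (i : ℝ) - 1) * μ := h2
end

section
/- Let M(φ, π*) be a Mallows model on permutations of [n] with 0 < φ < 1, let x_1, …, x_ℓ be ℓ distinct elements of [n] and p_1, …, p_ℓ be ℓ distinct positions in [n]. Then the probability under M(φ, π*) that a sampled permutation π places x_j in position p_j for all 1 ≤ j ≤ ℓ is at most ∏_{j=0}^{ℓ−1} 1/(φ^j + φ^{j+1} + ⋯ + φ^{n−1}) = (1−φ)^ℓ / ((1−φ^n)(φ−φ^n)⋯(φ^{ℓ−1}−φ^n)). -/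
open Finset

open scoped Classical

/-- insertion of a "worst" element at position `s` -/
def insPerm {n : ℕ} (s : Fin (n+1)) (τ : Equiv.Perm (Fin n)) : Equiv.Perm (Fin (n+1)) :=
  (finSuccEquivLast.trans (τ.optionCongr)).trans (finSuccEquiv' s).symm

lemma insPerm_last {n : ℕ} (s : Fin (n+1)) (τ : Equiv.Perm (Fin n)) :
    insPerm s τ (Fin.last n) = s := by
  simp [insPerm]

lemma insPerm_castSucc {n : ℕ} (s : Fin (n+1)) (τ : Equiv.Perm (Fin n)) (i : Fin n) :
    insPerm s τ (i.castSucc) = s.succAbove (τ i) := by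
  simp [insPerm, finSuccEquiv'_symm_some]

lemma insPerm_bijective {n : ℕ} :
    Function.Bijective (fun st : Fin (n+1) × Equiv.Perm (Fin n) => insPerm st.1 st.2) := by
  constructor
  · rintro ⟨s, τ⟩ ⟨s', τ'⟩ h
    simp only at h
    have hs : s = s' := by
      have := congrArg (fun g : Equiv.Perm (Fin (n+1)) => g (Fin.last n)) h
      simpa [insPerm_last] using this
    subst hs
    have hτ : τ = τ' := by
      ext i
      have := congrArg (fun g : Equiv.Perm (Fin (n+1)) => g (i.castSucc)) h
      simp only [insPerm_castSucc] at this
      have := Fin.succAbove_right_injective (p := s) this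
      exact congrArg Fin.val this
    rw [hτ]
  · intro σ
    set s := σ (Fin.last n) with hs
    set E : Option (Fin n) ≃ Option (Fin n) :=
      (finSuccEquivLast.symm.trans (σ.trans (finSuccEquiv' s))) with hE
    have hEnone : E none = none := by
      simp [hE, ← hs]
    refine ⟨⟨s, E.removeNone⟩, ?_⟩
    simp only
    ext a
    refine Fin.lastCases ?_ (fun i => ?_) a
    · rw [insPerm_last, hs]
    · rw [insPerm_castSucc]
      have hne : σ i.castSucc ≠ s := by
        rw [hs]
        exact fun hc => (ne_of_lt (Fin.castSucc_lt_last i)) (σ.injective hc)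
      obtain ⟨v, hv⟩ := Fin.exists_succAbove_eq hne
      have hEi : E (some i) = some v := by
        simp [hE, ← hv, finSuccEquiv'_succAbove]
      have : some (E.removeNone i) = some v := by
        rw [Equiv.removeNone_some E ⟨v, hEi⟩]; exact hEi
      rw [Option.some_inj.mp this, hv]

lemma filter_val_lt_card {n : ℕ} (s : Fin (n+1)) :
    (Finset.univ.filter fun v : Fin n => (v : ℕ) < (s : ℕ)).card = (s : ℕ) := by
  rw [Finset.card_filter]
  rw [Fin.sum_univ_eq_sum_range (fun i => if i < (s : ℕ) then 1 else 0) n]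
  rw [← Finset.card_filter]
  have : (Finset.range n).filter (fun i => i < (s : ℕ)) = Finset.range (s : ℕ) := by
    ext i
    simp only [Finset.mem_filter, Finset.mem_range]
    constructor
    · rintro ⟨_, h⟩; exact h
    · intro h; exact ⟨lt_of_lt_of_le h (Fin.is_le s), h⟩
  rw [this, Finset.card_range]

lemma lt_succAbove_iff' {n : ℕ} (s : Fin (n+1)) (v : Fin n) :
    s < s.succAbove v ↔ ¬ ((v : ℕ) < (s : ℕ)) := by
  by_cases h : v.castSucc < s
  · rw [Fin.succAbove_of_castSucc_lt s v h]
    simp only [Fin.lt_iff_val_lt_val, Fin.coe_castSucc] at h ⊢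
    omega
  · rw [Fin.succAbove_of_le_castSucc s v (not_lt.mp h)]
    simp only [Fin.lt_iff_val_lt_val, Fin.coe_castSucc, Fin.val_succ] at h ⊢
    omega

lemma numInv_insPerm {n : ℕ} (s : Fin (n+1)) (τ : Equiv.Perm (Fin n)) :
    numInv (insPerm s τ) = (n - (s : ℕ)) + numInv τ := by
  unfold numInv
  rw [Finset.card_filter, Finset.card_filter]
  rw [Fintype.sum_prod_type]
  rw [Fin.sum_univ_castSucc
    (f := fun a => ∑ b : Fin (n+1), if a < b ∧ insPerm s τ b < insPerm s τ a then 1 else 0)]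
  have hlast : (∑ b : Fin (n+1),
      if Fin.last n < b ∧ insPerm s τ b < insPerm s τ (Fin.last n) then 1 else 0) = 0 := by
    apply Finset.sum_eq_zero
    intro b _
    rw [if_neg]
    rintro ⟨hb, -⟩
    exact absurd (Fin.le_last b) (not_le.mpr hb)
  rw [hlast, add_zero]
  have hsplit : ∀ i : Fin n, (∑ b : Fin (n+1),
      if i.castSucc < b ∧ insPerm s τ b < insPerm s τ i.castSucc then 1 else 0)
      = (∑ j : Fin n, if i < j ∧ τ j < τ i then 1 else 0)
        + (if s < s.succAbove (τ i) then 1 else 0) := by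
    intro i
    rw [Fin.sum_univ_castSucc
      (f := fun b => if i.castSucc < b ∧ insPerm s τ b < insPerm s τ i.castSucc then 1 else 0)]
    congr 1
    · apply Finset.sum_congr rfl
      intro j _
      congr 1
      rw [insPerm_castSucc, insPerm_castSucc]
      rw [Fin.castSucc_lt_castSucc_iff, Fin.succAbove_lt_succAbove_iff]
    · rw [insPerm_last, insPerm_castSucc]
      congr 1
      simp [Fin.castSucc_lt_last]
  simp_rw [hsplit]
  rw [Finset.sum_add_distrib]
  have h2 : (∑ i : Fin n, if s < s.succAbove (τ i) then 1 else 0)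
      = ∑ v : Fin n, if s < s.succAbove v then 1 else 0 :=
    Equiv.sum_comp τ (fun v => if s < s.succAbove v then 1 else 0)
  have h3 : (∑ i : Fin n, if s < s.succAbove (τ i) then 1 else 0) = n - (s : ℕ) := by
    rw [h2]
    simp_rw [lt_succAbove_iff']
    rw [← Finset.card_filter]
    have := Finset.card_filter_add_card_filter_not
      (s := (Finset.univ : Finset (Fin n))) (p := fun v : Fin n => (v : ℕ) < (s : ℕ))
    rw [filter_val_lt_card] at this
    have hcard : (Finset.univ : Finset (Fin n)).card = n := by simp
    omega
  rw [h3]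
  rw [← Fintype.sum_prod_type
    (f := fun q : Fin n × Fin n => if q.1 < q.2 ∧ τ q.2 < τ q.1 then 1 else 0)]
  exact Nat.add_comm _ _

lemma dKT_eq_numInv {n : ℕ} (π σ : Equiv.Perm (Fin n)) : dKT π σ = numInv (σ * π⁻¹) := by
  unfold dKT numInv
  refine Finset.card_bij'
    (fun q _ => if π q.1 < π q.2 then (π q.1, π q.2) else (π q.2, π q.1))
    (fun q _ => if π⁻¹ q.1 < π⁻¹ q.2 then (π⁻¹ q.1, π⁻¹ q.2) else (π⁻¹ q.2, π⁻¹ q.1))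
    ?_ ?_ ?_ ?_
  · rintro ⟨a, b⟩ hq
    simp only [Finset.mem_filter, Finset.mem_univ, true_and] at hq ⊢
    obtain ⟨hab, hne⟩ := hq
    by_cases h : π a < π b
    · rw [if_pos h]
      refine ⟨h, ?_⟩
      simp only [Equiv.Perm.mul_apply, (show ∀ x, π⁻¹ (π x) = x from π.symm_apply_apply)]
      have hsne : σ a ≠ σ b := fun hc => (ne_of_lt hab) (σ.injective hc)
      have : ¬ (σ a < σ b) := fun hc => hne (iff_of_true h hc)
      exact (not_lt.mp this).lt_of_ne hsne.symm
    · rw [if_neg h]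
      have hpne : π a ≠ π b := fun hc => (ne_of_lt hab) (π.injective hc)
      have hba : π b < π a := (not_lt.mp h).lt_of_ne hpne.symm
      refine ⟨hba, ?_⟩
      simp only [Equiv.Perm.mul_apply, (show ∀ x, π⁻¹ (π x) = x from π.symm_apply_apply)]
      by_contra hc
      exact hne (iff_of_false h (fun hlt => hc hlt))
  · rintro ⟨a, b⟩ hq
    simp only [Finset.mem_filter, Finset.mem_univ, true_and] at hq ⊢
    obtain ⟨hab, hinv⟩ := hq
    simp only [Equiv.Perm.mul_apply] at hinv
    by_cases h : π⁻¹ a < π⁻¹ b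
    · rw [if_pos h]
      refine ⟨h, ?_⟩
      simp only [(show ∀ x, π (π⁻¹ x) = x from π.apply_symm_apply)]
      intro hiff
      exact absurd (hiff.mp hab) (not_lt.mpr (le_of_lt hinv))
    · rw [if_neg h]
      have hne : π⁻¹ a ≠ π⁻¹ b := fun hc => (ne_of_lt hab) ((π⁻¹).injective hc)
      have hba : π⁻¹ b < π⁻¹ a := (not_lt.mp h).lt_of_ne hne.symm
      refine ⟨hba, ?_⟩
      simp only [(show ∀ x, π (π⁻¹ x) = x from π.apply_symm_apply)]
      intro hiff
      exact absurd (hiff.mpr hinv) (not_lt.mpr (le_of_lt hab))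
  · rintro ⟨a, b⟩ hq
    simp only [Finset.mem_filter, Finset.mem_univ, true_and] at hq
    obtain ⟨hab, -⟩ := hq
    by_cases h : π a < π b
    · simp only [if_pos h, (show ∀ x, π⁻¹ (π x) = x from π.symm_apply_apply), if_pos hab]
    · simp only [if_neg h, (show ∀ x, π⁻¹ (π x) = x from π.symm_apply_apply), if_neg (not_lt.mpr (le_of_lt hab))]
  · rintro ⟨a, b⟩ hq
    simp only [Finset.mem_filter, Finset.mem_univ, true_and] at hq
    obtain ⟨hab, -⟩ := hq
    by_cases h : π⁻¹ a < π⁻¹ b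
    · simp only [if_pos h, (show ∀ x, π (π⁻¹ x) = x from π.apply_symm_apply), if_pos hab]
    · simp only [if_neg h, (show ∀ x, π (π⁻¹ x) = x from π.apply_symm_apply), if_neg (not_lt.mpr (le_of_lt hab))]

lemma sum_pow_le_of_distinct (φ : ℝ) (h0 : 0 ≤ φ) (h1 : φ ≤ 1) :
    ∀ (k : ℕ) (D : Finset ℕ), D.card = k → ∑ d ∈ D, φ ^ d ≤ ∑ t ∈ range k, φ ^ t := by
  intro k
  induction k with
  | zero => intro D hD; rw [Finset.card_eq_zero.mp hD]; simp
  | succ k ih =>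
    intro D hD
    have hne : D.Nonempty := Finset.card_pos.mp (by omega)
    set M := D.max' hne with hM
    have hMem : M ∈ D := D.max'_mem hne
    have hcard : (D.erase M).card = k := by
      rw [Finset.card_erase_of_mem hMem, hD]
      omega
    have hsub : D ⊆ Finset.range (M + 1) := by
      intro d hd
      rw [Finset.mem_range]
      exact Nat.lt_succ_of_le (D.le_max' d hd)
    have hkM : k ≤ M := by
      have := Finset.card_le_card hsub
      rw [hD, Finset.card_range] at this
      omega
    calc ∑ d ∈ D, φ ^ d = ∑ d ∈ D.erase M, φ ^ d + φ ^ M :=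
          (Finset.sum_erase_add D _ hMem).symm
      _ ≤ (∑ t ∈ range k, φ ^ t) + φ ^ k :=
          add_le_add (ih _ hcard) (pow_le_pow_of_le_one h0 h1 hkM)
      _ = ∑ t ∈ range (k+1), φ ^ t := (Finset.sum_range_succ _ _).symm

lemma key_ident (φ : ℝ) (hφ : φ ≠ 1) :
    ∀ (l m : ℕ),
    (∑ t ∈ range (m+1), φ^t) * ∏ j ∈ range l, (∑ t ∈ Ico j (m+l+1), φ^t)
  = (∑ t ∈ range (m+l+1), φ^t) * ∏ j ∈ range l, (∑ t ∈ Ico j (m+l), φ^t) := by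
  intro l
  induction l with
  | zero => intro m; simp
  | succ l ih =>
    intro m
    have e1 : m + (l+1) + 1 = (m+1) + l + 1 := by omega
    have e2 : m + (l+1) = (m+1) + l := by omega
    rw [e1, e2]
    rw [Finset.prod_range_succ, Finset.prod_range_succ]
    have scalar : (∑ t ∈ range (m+1), φ^t) * (∑ t ∈ Ico l (m+1+l+1), φ^t)
        = (∑ t ∈ range (m+2), φ^t) * (∑ t ∈ Ico l (m+1+l), φ^t) := by
      rw [geom_sum_eq hφ, geom_sum_eq hφ, geom_sum_Ico hφ (by omega), geom_sum_Ico hφ (by omega)]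
      have hne : φ - 1 ≠ 0 := sub_ne_zero.mpr hφ
      field_simp
      ring
    have ih' := ih (m+1)
    linear_combination (∏ j ∈ range l, ∑ t ∈ Ico j (m+1+l+1), φ^t) * scalar
      + (∑ t ∈ Ico l (m+1+l), φ^t) * ih'

lemma Ico_shift_le (φ : ℝ) (h0 : 0 ≤ φ) (h1 : φ ≤ 1) (j n : ℕ) :
    (∑ t ∈ Ico (j+1) (n+1), φ ^ t) ≤ ∑ t ∈ Ico j n, φ ^ t := by
  have : Ico (j+1) (n+1) = Finset.map (addRightEmbedding 1) (Ico j n) := by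
    rw [Finset.map_add_right_Ico]
  rw [this, Finset.sum_map]
  apply Finset.sum_le_sum
  intro t _
  simp only [addRightEmbedding_apply]
  calc φ ^ (t + 1) = φ ^ t * φ := by rw [pow_succ]
    _ ≤ φ ^ t * 1 := mul_le_mul_of_nonneg_left h1 (pow_nonneg h0 t)
    _ = φ ^ t := mul_one _

lemma main_bound (φ : ℝ) (hφ0 : 0 < φ) (hφ1 : φ < 1) :
    ∀ (n ℓ : ℕ) (x p : Fin ℓ → Fin n), Function.Injective x → Function.Injective p →
    (∑ σ : Equiv.Perm (Fin n), if ∀ j, σ (x j) = p j then φ ^ numInv σ else 0)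
      * ∏ j ∈ range ℓ, (∑ t ∈ Ico j n, φ ^ t)
    ≤ ∑ σ : Equiv.Perm (Fin n), φ ^ numInv σ := by
  have h0 : (0:ℝ) ≤ φ := le_of_lt hφ0
  have h1 : φ ≤ 1 := le_of_lt hφ1
  intro n
  induction n with
  | zero =>
    intro ℓ x p hx hp
    match ℓ, x with
    | 0, x => simp
    | (l+1), x => exact (x 0).elim0
  | succ n IH =>
    intro ℓ x p hx hp
    have hZn_pos : (0:ℝ) < ∑ τ : Equiv.Perm (Fin n), φ ^ numInv τ :=
      Finset.sum_pos (fun τ _ => pow_pos hφ0 _) Finset.univ_nonempty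
    have hZn_nonneg := le_of_lt hZn_pos
    have hSn1 : (∑ s : Fin (n+1), φ ^ (n - (s:ℕ))) = ∑ t ∈ range (n+1), φ ^ t := by
      rw [Fin.sum_univ_eq_sum_range (fun i => φ ^ (n - i)) (n+1)]
      calc ∑ i ∈ range (n+1), φ ^ (n - i)
          = ∑ i ∈ range (n+1), φ ^ (n + 1 - 1 - i) := by
            apply Finset.sum_congr rfl; intros; norm_num
        _ = ∑ t ∈ range (n+1), φ ^ t := Finset.sum_range_reflect (fun t => φ ^ t) (n+1)
    have hZ : (∑ σ : Equiv.Perm (Fin (n+1)), φ ^ numInv σ)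
        = (∑ t ∈ range (n+1), φ ^ t) * ∑ τ : Equiv.Perm (Fin n), φ ^ numInv τ := by
      rw [← Fintype.sum_bijective _ insPerm_bijective
        (fun st : Fin (n+1) × Equiv.Perm (Fin n) => φ ^ numInv (insPerm st.1 st.2))
        (fun σ => φ ^ numInv σ) (fun st => rfl)]
      rw [Fintype.sum_prod_type]
      simp_rw [numInv_insPerm, pow_add]
      rw [← Finset.sum_mul_sum]
      rw [hSn1]
    have hE : (∑ σ : Equiv.Perm (Fin (n+1)), if ∀ j, σ (x j) = p j then φ ^ numInv σ else 0)
        = ∑ s : Fin (n+1), ∑ τ : Equiv.Perm (Fin n),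
            (if ∀ j, insPerm s τ (x j) = p j then φ ^ ((n - (s:ℕ)) + numInv τ) else 0) := by
      rw [← Fintype.sum_bijective _ insPerm_bijective
        (fun st : Fin (n+1) × Equiv.Perm (Fin n) =>
          if ∀ j, insPerm st.1 st.2 (x j) = p j then φ ^ numInv (insPerm st.1 st.2) else 0)
        (fun σ => if ∀ j, σ (x j) = p j then φ ^ numInv σ else 0) (fun st => rfl)]
      rw [Fintype.sum_prod_type]
      simp_rw [numInv_insPerm]
    rcases Nat.eq_zero_or_pos ℓ with rfl | hℓpos
    · simp
    obtain ⟨ℓ', rfl⟩ : ∃ k, ℓ = k + 1 := ⟨ℓ - 1, by omega⟩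
    by_cases hA : ∃ J, x J = Fin.last n
    · -- the last-ranked element is one of the pinned elements
      obtain ⟨J, hJ⟩ := hA
      have hxne : ∀ k : Fin ℓ', x (J.succAbove k) ≠ Fin.last n := by
        intro k hc
        exact Fin.succAbove_ne J k (hx (hc.trans hJ.symm))
      set x' : Fin ℓ' → Fin n := fun k => (x (J.succAbove k)).castPred (hxne k) with hx'def
      have hx'inj : Function.Injective x' := by
        intro a b hab
        have hxx : x (J.succAbove a) = x (J.succAbove b) := by
          rw [← Fin.castSucc_castPred (x (J.succAbove a)) (hxne a),
              ← Fin.castSucc_castPred (x (J.succAbove b)) (hxne b)]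
          exact congrArg Fin.castSucc hab
        exact Fin.succAbove_right_injective (hx hxx)
      have hpne : ∀ k : Fin ℓ', p (J.succAbove k) ≠ p J := fun k hc =>
        Fin.succAbove_ne J k (hp hc)
      set p' : Fin ℓ' → Fin n := fun k => (Fin.exists_succAbove_eq (hpne k)).choose with hp'def
      have hp'spec : ∀ k, (p J).succAbove (p' k) = p (J.succAbove k) := fun k =>
        (Fin.exists_succAbove_eq (hpne k)).choose_spec
      have hp'inj : Function.Injective p' := by
        intro a b hab
        have hpp : p (J.succAbove a) = p (J.succAbove b) := by
          rw [← hp'spec a, ← hp'spec b, hab]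
        exact Fin.succAbove_right_injective (hp hpp)
      have hEvent : ∀ (s : Fin (n+1)) (τ : Equiv.Perm (Fin n)),
          (∀ j, insPerm s τ (x j) = p j) ↔ (s = p J ∧ ∀ k, τ (x' k) = p' k) := by
        intro s τ
        constructor
        · intro h
          have hs : s = p J := by
            have hh := h J; rwa [hJ, insPerm_last] at hh
          refine ⟨hs, fun k => ?_⟩
          have hk := h (J.succAbove k)
          rw [← Fin.castSucc_castPred (x (J.succAbove k)) (hxne k), insPerm_castSucc, hs,
            ← hp'spec k] at hk
          exact Fin.succAbove_right_injective hk
        · rintro ⟨hs, hk⟩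
          rw [Fin.forall_iff_succAbove J]
          constructor
          · rw [hJ, insPerm_last, hs]
          · intro k
            rw [← Fin.castSucc_castPred (x (J.succAbove k)) (hxne k), insPerm_castSucc,
              hk k, hs, hp'spec k]
      rw [hE, hZ]
      have inner_eq : ∀ s : Fin (n+1), (∑ τ : Equiv.Perm (Fin n),
            if ∀ j, insPerm s τ (x j) = p j then φ ^ ((n - (s:ℕ)) + numInv τ) else 0)
          = if s = p J then (φ ^ (n - (s:ℕ)) * ∑ τ : Equiv.Perm (Fin n),
              (if ∀ k, τ (x' k) = p' k then φ ^ numInv τ else 0)) else 0 := by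
        intro s
        by_cases hs : s = p J
        · rw [if_pos hs, Finset.mul_sum]
          apply Finset.sum_congr rfl
          intro τ _
          simp only [hEvent s τ]
          by_cases hq : ∀ k, τ (x' k) = p' k
          · rw [if_pos ⟨hs, hq⟩, if_pos hq, pow_add]
          · rw [if_neg (fun h => hq h.2), if_neg hq, mul_zero]
        · rw [if_neg hs]
          apply Finset.sum_eq_zero
          intro τ _
          exact if_neg (fun h => hs ((hEvent s τ).mp h).1)
      simp_rw [inner_eq]
      rw [Finset.sum_ite_eq' Finset.univ (p J), if_pos (Finset.mem_univ _)]
      set T := ∑ τ : Equiv.Perm (Fin n),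
        (if ∀ k, τ (x' k) = p' k then φ ^ numInv τ else 0) with hT
      have hT0 : 0 ≤ T := Finset.sum_nonneg (fun τ _ => by
        split
        · exact pow_nonneg h0 _
        · exact le_refl 0)
      have hIH := IH ℓ' x' p' hx'inj hp'inj
      have hF0 : (0:ℝ) ≤ ∏ j ∈ range (ℓ'+1), ∑ t ∈ Ico j (n+1), φ^t :=
        Finset.prod_nonneg (fun j _ => Finset.sum_nonneg fun t _ => pow_nonneg h0 t)
      have hprod : (∏ j ∈ range (ℓ'+1), ∑ t ∈ Ico j (n+1), φ^t)
          ≤ (∑ t ∈ range (n+1), φ^t) * ∏ j ∈ range ℓ', (∑ t ∈ Ico j n, φ^t) := by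
        rw [Finset.prod_range_succ' (fun j => ∑ t ∈ Ico j (n+1), φ^t) ℓ']
        have h00 : (∑ t ∈ Ico 0 (n+1), φ^t) = ∑ t ∈ range (n+1), φ^t := by
          rw [Finset.range_eq_Ico]
        rw [h00, mul_comm]
        apply mul_le_mul_of_nonneg_left _ (Finset.sum_nonneg fun t _ => pow_nonneg h0 t)
        apply Finset.prod_le_prod
        · intro j _; exact Finset.sum_nonneg fun t _ => pow_nonneg h0 t
        · intro j _; exact Ico_shift_le φ h0 h1 j n
      have hφpow : φ ^ (n - ((p J : Fin (n+1)) : ℕ)) ≤ 1 := pow_le_one₀ h0 h1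
      calc (φ ^ (n - ((p J : Fin (n+1)) : ℕ)) * T) * (∏ j ∈ range (ℓ'+1), ∑ t ∈ Ico j (n+1), φ^t)
          ≤ (1 * T) * (∏ j ∈ range (ℓ'+1), ∑ t ∈ Ico j (n+1), φ^t) :=
            mul_le_mul_of_nonneg_right (mul_le_mul_of_nonneg_right hφpow hT0) hF0
        _ = T * (∏ j ∈ range (ℓ'+1), ∑ t ∈ Ico j (n+1), φ^t) := by rw [one_mul]
        _ ≤ T * ((∑ t ∈ range (n+1), φ^t) * ∏ j ∈ range ℓ', (∑ t ∈ Ico j n, φ^t)) :=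
            mul_le_mul_of_nonneg_left hprod hT0
        _ = (∑ t ∈ range (n+1), φ^t) * (T * ∏ j ∈ range ℓ', (∑ t ∈ Ico j n, φ^t)) := by ring
        _ ≤ (∑ t ∈ range (n+1), φ^t) * ∑ τ : Equiv.Perm (Fin n), φ ^ numInv τ :=
            mul_le_mul_of_nonneg_left hIH (Finset.sum_nonneg fun t _ => pow_nonneg h0 t)
    · -- the last-ranked element is not pinned
      push_neg at hA
      set x' : Fin (ℓ'+1) → Fin n := fun j => (x j).castPred (hA j) with hx'def
      have hx'inj : Function.Injective x' := by
        intro a b hab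
        apply hx
        rw [← Fin.castSucc_castPred (x a) (hA a), ← Fin.castSucc_castPred (x b) (hA b)]
        exact congrArg Fin.castSucc hab
      have hl_le : ℓ'+1 ≤ n := by
        have := Fintype.card_le_of_injective x' hx'inj
        simpa using this
      have hEvent : ∀ (s : Fin (n+1)) (τ : Equiv.Perm (Fin n)),
          (∀ j, insPerm s τ (x j) = p j) ↔ (∀ j, s.succAbove (τ (x' j)) = p j) := by
        intro s τ
        constructor <;> intro h j
        · have hh := h j
          rwa [← Fin.castSucc_castPred (x j) (hA j), insPerm_castSucc] at hh
        · rw [← Fin.castSucc_castPred (x j) (hA j), insPerm_castSucc]; exact h j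
      rw [hE, hZ]
      set T : Fin (n+1) → ℝ := fun s => ∑ τ : Equiv.Perm (Fin n),
          (if ∀ j, s.succAbove (τ (x' j)) = p j then φ ^ numInv τ else 0) with hTdef
      have hsum_eq : ∀ s : Fin (n+1), (∑ τ : Equiv.Perm (Fin n),
            if ∀ j, insPerm s τ (x j) = p j then φ ^ ((n - (s:ℕ)) + numInv τ) else 0)
          = φ ^ (n - (s:ℕ)) * T s := by
        intro s
        rw [hTdef, Finset.mul_sum]
        apply Finset.sum_congr rfl
        intro τ _
        simp only [hEvent s τ]
        by_cases hq : ∀ j, s.succAbove (τ (x' j)) = p j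
        · rw [if_pos hq, if_pos hq, pow_add]
        · rw [if_neg hq, if_neg hq, mul_zero]
      simp_rw [hsum_eq]
      have hT0 : ∀ s, 0 ≤ T s := fun s => Finset.sum_nonneg (fun τ _ => by
        split
        · exact pow_nonneg h0 _
        · exact le_refl 0)
      have hTzero : ∀ j₀ : Fin (ℓ'+1), T (p j₀) = 0 := by
        intro j₀
        apply Finset.sum_eq_zero
        intro τ _
        rw [if_neg]
        intro h
        exact Fin.succAbove_ne (p j₀) (τ (x' j₀)) (h j₀)
      have hTbound : ∀ s : Fin (n+1), s ∉ Finset.image p Finset.univ →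
          T s * ∏ j ∈ range (ℓ'+1), (∑ t ∈ Ico j n, φ^t)
            ≤ ∑ τ : Equiv.Perm (Fin n), φ ^ numInv τ := by
        intro s hs
        have hpne : ∀ j, p j ≠ s := by
          intro j hc
          exact hs (Finset.mem_image.mpr ⟨j, Finset.mem_univ j, hc⟩)
        set p' : Fin (ℓ'+1) → Fin n := fun j => (Fin.exists_succAbove_eq (hpne j)).choose
          with hp'd
        have hp'spec : ∀ j, s.succAbove (p' j) = p j := fun j =>
          (Fin.exists_succAbove_eq (hpne j)).choose_spec
        have hp'inj : Function.Injective p' := by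
          intro a b hab
          apply hp
          rw [← hp'spec a, ← hp'spec b, hab]
        have hTs : T s = ∑ τ : Equiv.Perm (Fin n),
            (if ∀ j, τ (x' j) = p' j then φ ^ numInv τ else 0) := by
          rw [hTdef]
          apply Finset.sum_congr rfl
          intro τ _
          refine if_congr (forall_congr' fun j => ?_) rfl rfl
          rw [← hp'spec j]
          exact Fin.succAbove_right_injective.eq_iff
        rw [hTs]
        exact IH (ℓ'+1) x' p' hx'inj hp'inj
      -- arithmetic assembly
      set PG := ∏ j ∈ range (ℓ'+1), (∑ t ∈ Ico j (n+1), φ^t) with hPG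
      set Pg := ∏ j ∈ range (ℓ'+1), (∑ t ∈ Ico j n, φ^t) with hPg
      set S := ∑ t ∈ range (n+1), φ^t with hS
      set Sm := ∑ t ∈ range (n+1-(ℓ'+1)), φ^t with hSm
      have hPg_pos : 0 < Pg := by
        rw [hPg]
        apply Finset.prod_pos
        intro j hj
        apply Finset.sum_pos (fun t _ => pow_pos hφ0 t)
        rw [Finset.nonempty_Ico]
        exact lt_of_lt_of_le (Finset.mem_range.mp hj) hl_le
      have hSm_pos : 0 < Sm := by
        rw [hSm]
        apply Finset.sum_pos (fun t _ => pow_pos hφ0 t)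
        rw [Finset.nonempty_range_iff]
        omega
      have hS_nonneg : (0:ℝ) ≤ S := le_of_lt (by
        rw [hS]
        apply Finset.sum_pos (fun t _ => pow_pos hφ0 t)
        rw [Finset.nonempty_range_iff]; omega)
      have hident : Sm * PG = S * Pg := by
        obtain ⟨m, hm⟩ : ∃ m, n = m + (ℓ'+1) := ⟨n - (ℓ'+1), by omega⟩
        subst hm
        have e : m + (ℓ'+1) + 1 - (ℓ'+1) = m + 1 := by omega
        rw [hSm, hPG, hS, hPg, e]
        have e2 : m + (ℓ'+1) + 1 = m + (ℓ'+1) + 1 := rfl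
        exact key_ident φ (ne_of_lt hφ1) (ℓ'+1) m
      set C := Finset.univ \ Finset.image p Finset.univ with hC
      have hW : (∑ s ∈ C, φ ^ (n - (s:ℕ))) ≤ Sm := by
        have hCcard : C.card = n + 1 - (ℓ'+1) := by
          rw [hC, Finset.card_sdiff_of_subset (Finset.subset_univ _),
            Finset.card_image_of_injective _ hp]
          simp
        have hinj : ∀ a ∈ C, ∀ b ∈ C, n - ((a : Fin (n+1)):ℕ) = n - ((b : Fin (n+1)):ℕ) → a = b := by
          intro a _ b _ hab
          have ha := Fin.is_le a; have hb := Fin.is_le b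
          exact Fin.ext (by omega)
        rw [← Finset.sum_image (f := fun d => φ ^ d) (g := fun s : Fin (n+1) => n - (s:ℕ)) hinj]
        have hDcard : (C.image (fun s : Fin (n+1) => n - (s:ℕ))).card = n+1-(ℓ'+1) := by
          rw [Finset.card_image_of_injOn]
          · exact hCcard
          · intro a ha b hb hab
            exact hinj a ha b hb hab
        rw [hSm]
        rw [← hDcard]
        exact sum_pow_le_of_distinct φ h0 h1 _ _ rfl
      -- final chain
      apply le_of_mul_le_mul_right _ (mul_pos hSm_pos hPg_pos)
      have hdrop : (∑ s : Fin (n+1), φ ^ (n - (s:ℕ)) * T s * Pg)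
          = ∑ s ∈ C, φ ^ (n - (s:ℕ)) * T s * Pg := by
        rw [hC]
        rw [← Finset.sum_sdiff (Finset.subset_univ (Finset.image p Finset.univ))]
        have hz : (∑ s ∈ Finset.image p Finset.univ, φ ^ (n - (s:ℕ)) * T s * Pg) = 0 := by
          apply Finset.sum_eq_zero
          intro s hs
          obtain ⟨j₀, _, rfl⟩ := Finset.mem_image.mp hs
          rw [hTzero j₀, mul_zero, zero_mul]
        rw [hz, add_zero]
      calc (∑ s : Fin (n+1), φ ^ (n - (s:ℕ)) * T s) * PG * (Sm * Pg)
          = (Sm * PG) * ((∑ s : Fin (n+1), φ ^ (n - (s:ℕ)) * T s) * Pg) := by ring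
        _ = (S * Pg) * ((∑ s : Fin (n+1), φ ^ (n - (s:ℕ)) * T s) * Pg) := by rw [hident]
        _ = (S * Pg) * (∑ s : Fin (n+1), φ ^ (n - (s:ℕ)) * T s * Pg) := by
            congr 1
            rw [Finset.sum_mul]
        _ = (S * Pg) * (∑ s ∈ C, φ ^ (n - (s:ℕ)) * T s * Pg) := by rw [hdrop]
        _ ≤ (S * Pg) * (∑ s ∈ C, φ ^ (n - (s:ℕ)) * (∑ τ : Equiv.Perm (Fin n), φ ^ numInv τ)) := by
            apply mul_le_mul_of_nonneg_left _ (mul_nonneg hS_nonneg (le_of_lt hPg_pos))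
            apply Finset.sum_le_sum
            intro s hs
            have hsnot : s ∉ Finset.image p Finset.univ := (Finset.mem_sdiff.mp hs).2
            calc φ ^ (n - (s:ℕ)) * T s * Pg = φ ^ (n - (s:ℕ)) * (T s * Pg) := by ring
              _ ≤ φ ^ (n - (s:ℕ)) * (∑ τ : Equiv.Perm (Fin n), φ ^ numInv τ) :=
                  mul_le_mul_of_nonneg_left (hTbound s hsnot) (pow_nonneg h0 _)
        _ = (S * Pg) * ((∑ s ∈ C, φ ^ (n - (s:ℕ))) * (∑ τ : Equiv.Perm (Fin n), φ ^ numInv τ)) := by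
            congr 1
            rw [Finset.sum_mul]
        _ ≤ (S * Pg) * (Sm * (∑ τ : Equiv.Perm (Fin n), φ ^ numInv τ)) := by
            apply mul_le_mul_of_nonneg_left _ (mul_nonneg hS_nonneg (le_of_lt hPg_pos))
            exact mul_le_mul_of_nonneg_right hW hZn_nonneg
        _ = S * (∑ τ : Equiv.Perm (Fin n), φ ^ numInv τ) * (Sm * Pg) := by ring

open scoped Classical in
/-- **Local query upper bound (from Theorem 6.2 of Liu–Moitra).** For a Mallows model
`M(φ, π*)` with `0 < φ < 1`, distinct elements `x_1, …, x_ℓ` and distinct positions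
`p_1, …, p_ℓ`, the probability that a sample places `x_j` in position `p_j` for all `j`
is at most `∏_{j=0}^{ℓ-1} 1/(φ^j + ⋯ + φ^{n-1})`, which equals
`(1-φ)^ℓ / ((1-φ^n)(φ-φ^n)⋯(φ^{ℓ-1}-φ^n))`. -/
theorem placement_probability_bound (n ℓ : ℕ) (φ : ℝ) (hφ0 : 0 < φ) (hφ1 : φ < 1)
    (πstar : Equiv.Perm (Fin n)) (x p : Fin ℓ → Fin n)
    (hx : Function.Injective x) (hp : Function.Injective p) :
    (∑ σ : Equiv.Perm (Fin n), if ∀ j, σ (x j) = p j then mallows φ πstar σ else 0)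
        ≤ ∏ j ∈ Finset.range ℓ, (∑ t ∈ Finset.Ico j n, φ ^ t)⁻¹ ∧
    (∏ j ∈ Finset.range ℓ, (∑ t ∈ Finset.Ico j n, φ ^ t)⁻¹)
        = (1 - φ) ^ ℓ / ∏ j ∈ Finset.range ℓ, (φ ^ j - φ ^ n) := by
  have h0 : (0:ℝ) ≤ φ := le_of_lt hφ0
  have hone : φ ≠ 1 := ne_of_lt hφ1
  have hℓn : ℓ ≤ n := by simpa using Fintype.card_le_of_injective x hx
  have hg_pos : (0:ℝ) < ∏ j ∈ range ℓ, (∑ t ∈ Ico j n, φ ^ t) := by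
    apply Finset.prod_pos
    intro j hj
    apply Finset.sum_pos (fun t _ => pow_pos hφ0 t)
    rw [Finset.nonempty_Ico]
    exact lt_of_lt_of_le (Finset.mem_range.mp hj) hℓn
  constructor
  · -- the probability bound
    have hZeq : (∑ τ : Equiv.Perm (Fin n), φ ^ dKT πstar τ)
        = ∑ τ : Equiv.Perm (Fin n), φ ^ numInv τ := by
      simp_rw [dKT_eq_numInv]
      exact Equiv.sum_comp (Equiv.mulRight πstar⁻¹) (fun τ => φ ^ numInv τ)
    have hZpos : (0:ℝ) < ∑ τ : Equiv.Perm (Fin n), φ ^ dKT πstar τ :=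
      Finset.sum_pos (fun τ _ => pow_pos hφ0 _) Finset.univ_nonempty
    have hNum : (∑ σ : Equiv.Perm (Fin n), if ∀ j, σ (x j) = p j then φ ^ dKT πstar σ else 0)
        = ∑ τ : Equiv.Perm (Fin n),
            if ∀ j, τ (πstar (x j)) = p j then φ ^ numInv τ else 0 := by
      simp_rw [dKT_eq_numInv]
      rw [← Equiv.sum_comp (Equiv.mulRight πstar)
        (fun σ : Equiv.Perm (Fin n) =>
          if ∀ j, σ (x j) = p j then φ ^ numInv (σ * πstar⁻¹) else 0)]
      apply Finset.sum_congr rfl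
      intro τ _
      have hmr : (Equiv.mulRight πstar) τ = τ * πstar := rfl
      rw [hmr]
      have h2 : τ * πstar * πstar⁻¹ = τ := mul_inv_cancel_right τ πstar
      rw [h2]
      refine if_congr (forall_congr' fun j => ?_) rfl rfl
      rw [Equiv.Perm.mul_apply]
    have hmain := main_bound φ hφ0 hφ1 n ℓ (fun j => πstar (x j)) p
      ((Equiv.injective πstar).comp hx) hp
    have hsum : (∑ σ : Equiv.Perm (Fin n), if ∀ j, σ (x j) = p j then mallows φ πstar σ else 0)
        = (∑ σ : Equiv.Perm (Fin n), if ∀ j, σ (x j) = p j then φ ^ dKT πstar σ else 0)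
          / ∑ τ : Equiv.Perm (Fin n), φ ^ dKT πstar τ := by
      rw [Finset.sum_div]
      apply Finset.sum_congr rfl
      intro σ _
      unfold mallows
      split
      · rfl
      · rw [zero_div]
    rw [hsum, Finset.prod_inv_distrib, hNum, hZeq]
    rw [div_le_iff₀ (by rw [← hZeq]; exact hZpos), inv_mul_eq_div, le_div_iff₀ hg_pos]
    exact hmain
  · -- the closed form
    have hterm : ∀ j ∈ range ℓ, (∑ t ∈ Ico j n, φ ^ t)⁻¹ = (1 - φ)/(φ ^ j - φ ^ n) := by
      intro j hj
      rw [geom_sum_Ico hone (le_of_lt (lt_of_lt_of_le (Finset.mem_range.mp hj) hℓn))]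
      rw [inv_div]
      rw [show φ - 1 = -(1-φ) by ring, show φ^n - φ^j = -(φ^j - φ^n) by ring, neg_div_neg_eq]
    rw [Finset.prod_congr rfl hterm, Finset.prod_div_distrib, Finset.prod_const,
      Finset.card_range]
end

section
/- Let 0 ≤ φ ≤ 1 and let π_1, π_2 be permutations of [n] such that π_2 is obtained from π_1 by reversing m pairwise disjoint pairs of elements, each pair occupying two consecutive positions in π_1 (so each pair is also consecutive in π_2). Then d_TV(M(φ, π_1), M(φ, π_2)) ≥ (1/2) · (Σ_{i=0}^{m} C(m, i) |φ^i − φ^{m−i}|) / (1+φ)^m. Moreover, for each i, the probability under M(φ, π_1) that a sampled permutation ranks exactly i of these m pairs in reversed relative order is C(m, i) φ^i / (1+φ)^m. -/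
open Finset

namespace DPR

def D {n : ℕ} (π σ : Equiv.Perm (Fin n)) : Finset (Fin n × Fin n) :=
  univ.filter fun p => ¬((π p.1 < π p.2) ↔ (σ p.1 < σ p.2))

lemma mem_D {n : ℕ} {π σ : Equiv.Perm (Fin n)} {p : Fin n × Fin n} :
    p ∈ D π σ ↔ ¬((π p.1 < π p.2) ↔ (σ p.1 < σ p.2)) := by
  simp [D]

def R {n m : ℕ} (x y : Fin m → Fin n) (σ : Equiv.Perm (Fin n)) : Finset (Fin m) :=
  univ.filter fun j => σ (y j) < σ (x j)

lemma mem_R {n m : ℕ} {x y : Fin m → Fin n} {σ : Equiv.Perm (Fin n)} {j : Fin m} :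
    j ∈ R x y σ ↔ σ (y j) < σ (x j) := by simp [R]

lemma dKT_self {n : ℕ} (π : Equiv.Perm (Fin n)) : dKT π π = 0 := by
  simp [dKT]

lemma symm_cond {n : ℕ} (π σ : Equiv.Perm (Fin n)) (a b : Fin n) (hab : a ≠ b)
    (h : ¬((π a < π b) ↔ (σ a < σ b))) : ¬((π b < π a) ↔ (σ b < σ a)) := by
  have h1 : (π a : ℕ) ≠ (π b : ℕ) := by
    simp only [ne_eq, Fin.val_eq_val, EmbeddingLike.apply_eq_iff_eq]; exact hab
  have h2 : (σ a : ℕ) ≠ (σ b : ℕ) := by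
    simp only [ne_eq, Fin.val_eq_val, EmbeddingLike.apply_eq_iff_eq]; exact hab
  simp only [Fin.lt_def] at h ⊢
  omega

lemma card_D {n : ℕ} (π σ : Equiv.Perm (Fin n)) : (D π σ).card = 2 * dKT π σ := by
  classical
  have hsplit := Finset.card_filter_add_card_filter_not
    (s := D π σ) (p := fun p : Fin n × Fin n => p.1 < p.2)
  have h1 : (D π σ).filter (fun p => p.1 < p.2) =
      univ.filter fun p : Fin n × Fin n =>
        p.1 < p.2 ∧ ¬((π p.1 < π p.2) ↔ (σ p.1 < σ p.2)) := by
    simp only [D, filter_filter]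
    exact filter_congr (by tauto)
  have h2 : ((D π σ).filter (fun p => ¬ p.1 < p.2)).card
      = ((D π σ).filter (fun p => p.1 < p.2)).card := by
    apply Finset.card_nbij' (i := Prod.swap) (j := Prod.swap)
    · intro p hp
      simp only [Finset.mem_coe, mem_filter, mem_D, Prod.fst_swap, Prod.snd_swap] at hp ⊢
      obtain ⟨hp1, hp2⟩ := hp
      have hne : p.1 ≠ p.2 := by rintro h; exact hp1 (by rw [h]; simp)
      exact ⟨symm_cond π σ _ _ hne hp1, hne.lt_or_gt.resolve_left hp2⟩
    · intro p hp
      simp only [Finset.mem_coe, mem_filter, mem_D, Prod.fst_swap, Prod.snd_swap] at hp ⊢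
      obtain ⟨hp1, hp2⟩ := hp
      have hne : p.1 ≠ p.2 := hp2.ne
      exact ⟨symm_cond π σ _ _ hne hp1, not_lt.2 hp2.le⟩
    · intro p _; simp
    · intro p _; simp
  have : dKT π σ = ((D π σ).filter (fun p => p.1 < p.2)).card := by
    rw [h1]; rfl
  omega

section
variable {n m : ℕ} {π₁ : Equiv.Perm (Fin n)} {x y : Fin m → Fin n} {φ : ℝ}
variable (hdistinct : Function.Injective (Sum.elim x y : Fin m ⊕ Fin m → Fin n))
variable (hconsec : ∀ i, ((π₁ (y i) : ℕ)) = (π₁ (x i) : ℕ) + 1)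

include hdistinct in
lemma hxy : ∀ j k, x j ≠ y k := by
  intro j k h
  have := hdistinct (a₁ := Sum.inl j) (a₂ := Sum.inr k) (by simpa using h)
  simp at this

include hdistinct in
lemma hxx : ∀ j k, x j = x k → j = k := by
  intro j k h
  have := hdistinct (a₁ := Sum.inl j) (a₂ := Sum.inl k) (by simpa using h)
  simpa using this

include hdistinct in
lemma hyy : ∀ j k, y j = y k → j = k := by
  intro j k h
  have := hdistinct (a₁ := Sum.inr j) (a₂ := Sum.inr k) (by simpa using h)
  simpa using this

include hdistinct hconsec in
/-- swapping `x j, y j` in the arguments of `π₁` doesn't change order except on the pair itself -/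
lemma key (j : Fin m) (u v : Fin n) (huv : u ≠ v)
    (h1 : ¬(u = x j ∧ v = y j)) (h2 : ¬(u = y j ∧ v = x j)) :
    (π₁ (Equiv.swap (x j) (y j) u) < π₁ (Equiv.swap (x j) (y j) v) ↔ π₁ u < π₁ v) := by
  have hxyj : x j ≠ y j := hxy hdistinct j j
  have hval : ∀ a b : Fin n, π₁ a = π₁ b ↔ a = b := by
    intro a b; exact EmbeddingLike.apply_eq_iff_eq π₁
  by_cases hu1 : u = x j
  · have hv1 : v ≠ x j := fun h => huv (hu1.trans h.symm)
    have hv2 : v ≠ y j := fun h => h1 ⟨hu1, h⟩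
    rw [hu1, Equiv.swap_apply_left, Equiv.swap_apply_of_ne_of_ne hv1 hv2]
    have e1 : (π₁ (y j) : ℕ) = (π₁ (x j) : ℕ) + 1 := hconsec j
    have e2 : (π₁ v : ℕ) ≠ (π₁ (x j) : ℕ) := by
      rw [Ne, Fin.val_eq_val, hval]; exact hv1
    have e3 : (π₁ v : ℕ) ≠ (π₁ (y j) : ℕ) := by
      rw [Ne, Fin.val_eq_val, hval]; exact hv2
    simp only [Fin.lt_def]; omega
  · by_cases hu2 : u = y j
    · have hv1 : v ≠ x j := fun h => h2 ⟨hu2, h⟩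
      have hv2 : v ≠ y j := fun h => huv (hu2.trans h.symm)
      rw [hu2, Equiv.swap_apply_right, Equiv.swap_apply_of_ne_of_ne hv1 hv2]
      have e1 : (π₁ (y j) : ℕ) = (π₁ (x j) : ℕ) + 1 := hconsec j
      have e2 : (π₁ v : ℕ) ≠ (π₁ (x j) : ℕ) := by
        rw [Ne, Fin.val_eq_val, hval]; exact hv1
      have e3 : (π₁ v : ℕ) ≠ (π₁ (y j) : ℕ) := by
        rw [Ne, Fin.val_eq_val, hval]; exact hv2
      simp only [Fin.lt_def]; omega
    · rw [Equiv.swap_apply_of_ne_of_ne hu1 hu2]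
      by_cases hv1 : v = x j
      · rw [hv1, Equiv.swap_apply_left]
        have e1 : (π₁ (y j) : ℕ) = (π₁ (x j) : ℕ) + 1 := hconsec j
        have e2 : (π₁ u : ℕ) ≠ (π₁ (x j) : ℕ) := by
          rw [Ne, Fin.val_eq_val, hval]; exact hu1
        have e3 : (π₁ u : ℕ) ≠ (π₁ (y j) : ℕ) := by
          rw [Ne, Fin.val_eq_val, hval]; exact hu2
        simp only [Fin.lt_def]; omega
      · by_cases hv2 : v = y j
        · rw [hv2, Equiv.swap_apply_right]
          have e1 : (π₁ (y j) : ℕ) = (π₁ (x j) : ℕ) + 1 := hconsec j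
          have e2 : (π₁ u : ℕ) ≠ (π₁ (x j) : ℕ) := by
            rw [Ne, Fin.val_eq_val, hval]; exact hu1
          have e3 : (π₁ u : ℕ) ≠ (π₁ (y j) : ℕ) := by
            rw [Ne, Fin.val_eq_val, hval]; exact hu2
          simp only [Fin.lt_def]; omega
        · rw [Equiv.swap_apply_of_ne_of_ne hv1 hv2]

include hdistinct hconsec in
lemma D_swap (σ : Equiv.Perm (Fin n)) (j : Fin m) (h : σ (y j) < σ (x j)) :
    D π₁ σ = insert (x j, y j) (insert (y j, x j)
      ((D π₁ (σ * Equiv.swap (x j) (y j))).map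
        ((Equiv.swap (x j) (y j)).prodCongr (Equiv.swap (x j) (y j))).toEmbedding)) := by
  have hxyj : x j ≠ y j := hxy hdistinct j j
  have hπxy : π₁ (x j) < π₁ (y j) := by
    have := hconsec j; simp only [Fin.lt_def]; omega
  ext q
  obtain ⟨u, v⟩ := q
  have hmap : ∀ a b : Fin n, (a, b) ∈
      ((D π₁ (σ * Equiv.swap (x j) (y j))).map
        ((Equiv.swap (x j) (y j)).prodCongr (Equiv.swap (x j) (y j))).toEmbedding) ↔
      ¬((π₁ (Equiv.swap (x j) (y j) a) < π₁ (Equiv.swap (x j) (y j) b)) ↔ (σ a < σ b)) := by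
    intro a b
    rw [Finset.mem_map_equiv]
    simp only [Equiv.prodCongr_symm, Equiv.symm_swap, Equiv.prodCongr_apply, Prod.map]
    rw [mem_D]
    simp only [Equiv.Perm.mul_apply, Equiv.swap_apply_self]
  simp only [Finset.mem_insert, hmap, mem_D, Prod.mk.injEq]
  by_cases huv : u = v
  · subst huv
    simp only [lt_self_iff_false, iff_self, not_true_eq_false, false_iff]
    rintro ((⟨rfl, h2⟩) | (⟨rfl, h2⟩) | hh)
    · exact hxyj h2
    · exact hxyj h2.symm
    · exact hh
  · by_cases hc1 : u = x j ∧ v = y j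
    · obtain ⟨rfl, rfl⟩ := hc1
      refine ⟨fun _ => Or.inl ⟨rfl, rfl⟩, fun _ => ?_⟩
      rw [iff_true_intro hπxy, true_iff]
      exact asymm h
    · by_cases hc2 : u = y j ∧ v = x j
      · obtain ⟨rfl, rfl⟩ := hc2
        refine ⟨fun _ => Or.inr (Or.inl ⟨rfl, rfl⟩), fun _ => ?_⟩
        rw [iff_false_intro (asymm hπxy), false_iff, not_not]
        exact h
      · rw [key hdistinct hconsec j u v huv hc1 hc2]
        constructor
        · intro hh; right; right; exact hh
        · rintro ((⟨rfl, rfl⟩) | (⟨rfl, rfl⟩) | hh)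
          · exact absurd ⟨rfl, rfl⟩ hc1
          · exact absurd ⟨rfl, rfl⟩ hc2
          · exact hh

include hdistinct hconsec in
lemma dKT_swap_lt (σ : Equiv.Perm (Fin n)) (j : Fin m) (h : σ (y j) < σ (x j)) :
    dKT π₁ σ = dKT π₁ (σ * Equiv.swap (x j) (y j)) + 1 := by
  have hxyj : x j ≠ y j := hxy hdistinct j j
  have hπxy : π₁ (x j) < π₁ (y j) := by
    have := hconsec j; simp only [Fin.lt_def]; omega
  set σ' := σ * Equiv.swap (x j) (y j) with hσ'
  set s := (D π₁ σ').map
      ((Equiv.swap (x j) (y j)).prodCongr (Equiv.swap (x j) (y j))).toEmbedding with hs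
  have hmap : ∀ a b : Fin n, (a, b) ∈ s ↔
      ¬((π₁ (Equiv.swap (x j) (y j) a) < π₁ (Equiv.swap (x j) (y j) b)) ↔ (σ a < σ b)) := by
    intro a b
    rw [hs, Finset.mem_map_equiv]
    simp only [Equiv.prodCongr_symm, Equiv.symm_swap, Equiv.prodCongr_apply, Prod.map]
    rw [mem_D]
    simp only [hσ', Equiv.Perm.mul_apply, Equiv.swap_apply_self]
  have hb : (y j, x j) ∉ s := by
    rw [hmap]
    simp only [Equiv.swap_apply_left, Equiv.swap_apply_right, not_not]
    exact iff_of_true hπxy h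
  have ha : (x j, y j) ∉ insert (y j, x j) s := by
    simp only [Finset.mem_insert, Prod.mk.injEq, not_or]
    constructor
    · rintro ⟨h1, -⟩; exact hxyj h1
    · rw [hmap]
      simp only [Equiv.swap_apply_left, Equiv.swap_apply_right, not_not]
      exact iff_of_false (asymm hπxy) (asymm h)
  have hcard : (D π₁ σ).card = (D π₁ σ').card + 2 := by
    rw [D_swap hdistinct hconsec σ j h, Finset.card_insert_of_notMem ha,
      Finset.card_insert_of_notMem hb, hs, Finset.card_map]
  rw [card_D, card_D] at hcard
  omega

include hdistinct in
lemma R_swap (σ : Equiv.Perm (Fin n)) (j : Fin m) :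
    ∀ k, k ≠ j →
      (k ∈ R x y (σ * Equiv.swap (x j) (y j)) ↔ k ∈ R x y σ) := by
  intro k hk
  have h1 : x k ≠ x j := fun h => hk (hxx hdistinct k j h)
  have h2 : x k ≠ y j := hxy hdistinct k j
  have h3 : y k ≠ x j := (hxy hdistinct j k).symm
  have h4 : y k ≠ y j := fun h => hk (hyy hdistinct k j h)
  simp only [mem_R, Equiv.Perm.mul_apply, Equiv.swap_apply_of_ne_of_ne h1 h2,
    Equiv.swap_apply_of_ne_of_ne h3 h4]

include hdistinct in
lemma R_swap_self (σ : Equiv.Perm (Fin n)) (j : Fin m) :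
    (j ∈ R x y (σ * Equiv.swap (x j) (y j)) ↔ ¬ j ∈ R x y σ) := by
  have hxyj : x j ≠ y j := hxy hdistinct j j
  have : σ (x j) ≠ σ (y j) := fun h => hxyj (σ.injective h)
  simp only [mem_R, Equiv.Perm.mul_apply, Equiv.swap_apply_left, Equiv.swap_apply_right]
  constructor
  · exact fun h => asymm h
  · intro h
    rcases this.lt_or_gt with h' | h'
    · exact h'
    · exact absurd h' h

include hdistinct in
lemma R_swap_mem (σ : Equiv.Perm (Fin n)) (j : Fin m) (h : j ∈ R x y σ) :
    R x y (σ * Equiv.swap (x j) (y j)) = (R x y σ).erase j := by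
  ext k
  by_cases hk : k = j
  · subst hk
    simp only [Finset.mem_erase, ne_eq, not_true_eq_false, false_and, iff_false]
    rw [R_swap_self hdistinct]
    exact not_not_intro h
  · rw [R_swap hdistinct σ j k hk, Finset.mem_erase]
    simp [hk]

include hdistinct in
lemma R_swap_not_mem (σ : Equiv.Perm (Fin n)) (j : Fin m) (h : j ∉ R x y σ) :
    R x y (σ * Equiv.swap (x j) (y j)) = insert j (R x y σ) := by
  ext k
  by_cases hk : k = j
  · subst hk
    simp only [Finset.mem_insert, true_or, iff_true]
    rw [R_swap_self hdistinct]
    exact h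
  · rw [R_swap hdistinct σ j k hk, Finset.mem_insert]
    simp [hk]

include hdistinct hconsec in
lemma sum_step (S : Finset (Fin m)) (j : Fin m) (hj : j ∉ S) :
    ∑ σ ∈ univ.filter (fun σ : Equiv.Perm (Fin n) => R x y σ = insert j S), φ ^ dKT π₁ σ
      = φ * ∑ σ ∈ univ.filter (fun σ : Equiv.Perm (Fin n) => R x y σ = S), φ ^ dKT π₁ σ := by
  rw [Finset.mul_sum]
  refine Finset.sum_nbij' (i := fun σ => σ * Equiv.swap (x j) (y j))
    (j := fun σ => σ * Equiv.swap (x j) (y j)) ?_ ?_ ?_ ?_ ?_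
  · intro σ hσ
    simp only [Finset.mem_filter, Finset.mem_univ, true_and] at hσ ⊢
    have hjR : j ∈ R x y σ := hσ ▸ Finset.mem_insert_self j S
    rw [R_swap_mem hdistinct σ j hjR, hσ, Finset.erase_insert hj]
  · intro σ hσ
    simp only [Finset.mem_filter, Finset.mem_univ, true_and] at hσ ⊢
    have hjR : j ∉ R x y σ := hσ ▸ hj
    rw [R_swap_not_mem hdistinct σ j hjR, hσ]
  · intro σ _
    show σ * Equiv.swap (x j) (y j) * Equiv.swap (x j) (y j) = σ
    rw [mul_assoc, Equiv.swap_mul_self, mul_one]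
  · intro σ _
    show σ * Equiv.swap (x j) (y j) * Equiv.swap (x j) (y j) = σ
    rw [mul_assoc, Equiv.swap_mul_self, mul_one]
  · intro σ hσ
    simp only [Finset.mem_filter, Finset.mem_univ, true_and] at hσ
    have hjR : j ∈ R x y σ := hσ ▸ Finset.mem_insert_self j S
    rw [dKT_swap_lt hdistinct hconsec σ j (mem_R.1 hjR), pow_succ]
    ring

include hdistinct hconsec in
lemma sum_fiber (S : Finset (Fin m)) :
    ∑ σ ∈ univ.filter (fun σ : Equiv.Perm (Fin n) => R x y σ = S), φ ^ dKT π₁ σ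
      = φ ^ S.card *
        ∑ σ ∈ univ.filter (fun σ : Equiv.Perm (Fin n) => R x y σ = (∅ : Finset (Fin m))),
          φ ^ dKT π₁ σ := by
  induction S using Finset.induction_on with
  | empty => simp
  | insert j S hj ih =>
    rw [sum_step hdistinct hconsec S j hj, ih, Finset.card_insert_of_notMem hj, pow_succ]
    ring

include hdistinct hconsec in
lemma N_eq (i : ℕ) :
    ∑ σ ∈ univ.filter (fun σ : Equiv.Perm (Fin n) => (R x y σ).card = i), φ ^ dKT π₁ σ
      = (m.choose i : ℝ) * φ ^ i *
        ∑ σ ∈ univ.filter (fun σ : Equiv.Perm (Fin n) => R x y σ = (∅ : Finset (Fin m))),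
          φ ^ dKT π₁ σ := by
  have hmaps : ∀ σ ∈ univ.filter (fun σ : Equiv.Perm (Fin n) => (R x y σ).card = i),
      R x y σ ∈ univ.filter (fun S : Finset (Fin m) => S.card = i) := by
    intro σ hσ
    simp only [Finset.mem_filter, Finset.mem_univ, true_and] at hσ ⊢
    exact hσ
  rw [← Finset.sum_fiberwise_of_maps_to hmaps]
  have hinner : ∀ S ∈ univ.filter (fun S : Finset (Fin m) => S.card = i),
      (∑ σ ∈ (univ.filter (fun σ : Equiv.Perm (Fin n) => (R x y σ).card = i)).filter
          (fun σ => R x y σ = S), φ ^ dKT π₁ σ)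
        = φ ^ i * ∑ σ ∈ univ.filter
            (fun σ : Equiv.Perm (Fin n) => R x y σ = (∅ : Finset (Fin m))), φ ^ dKT π₁ σ := by
    intro S hS
    simp only [Finset.mem_filter, Finset.mem_univ, true_and] at hS
    rw [Finset.filter_filter]
    have : (univ.filter fun σ : Equiv.Perm (Fin n) => (R x y σ).card = i ∧ R x y σ = S)
        = univ.filter fun σ : Equiv.Perm (Fin n) => R x y σ = S := by
      apply Finset.filter_congr
      intro σ _
      constructor
      · exact fun h => h.2
      · exact fun h => ⟨h ▸ hS, h⟩
    rw [this, sum_fiber hdistinct hconsec S, hS]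
  rw [Finset.sum_congr rfl hinner, Finset.sum_const]
  have hcard : (univ.filter (fun S : Finset (Fin m) => S.card = i)).card = m.choose i := by
    rw [← Finset.powerset_univ, ← Finset.powersetCard_eq_filter, Finset.card_powersetCard,
      Finset.card_univ, Fintype.card_fin]
  rw [hcard]
  rw [nsmul_eq_mul]
  ring

include hdistinct hconsec in
lemma Z_eq :
    ∑ σ : Equiv.Perm (Fin n), φ ^ dKT π₁ σ
      = (∑ σ ∈ univ.filter
            (fun σ : Equiv.Perm (Fin n) => R x y σ = (∅ : Finset (Fin m))), φ ^ dKT π₁ σ)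
          * (1 + φ) ^ m := by
  have hmaps : ∀ σ ∈ (univ : Finset (Equiv.Perm (Fin n))),
      (R x y σ).card ∈ Finset.range (m + 1) := by
    intro σ _
    rw [Finset.mem_range, Nat.lt_succ_iff]
    simpa using Finset.card_le_univ (R x y σ)
  rw [← Finset.sum_fiberwise_of_maps_to hmaps]
  have : ∀ i ∈ Finset.range (m + 1),
      (∑ σ ∈ univ.filter (fun σ : Equiv.Perm (Fin n) => (R x y σ).card = i), φ ^ dKT π₁ σ)
        = (m.choose i : ℝ) * φ ^ i *
          ∑ σ ∈ univ.filter
            (fun σ : Equiv.Perm (Fin n) => R x y σ = (∅ : Finset (Fin m))), φ ^ dKT π₁ σ := by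
    intro i _
    exact N_eq hdistinct hconsec i
  rw [Finset.sum_congr rfl this]
  rw [add_comm (1 : ℝ) φ, add_pow]
  rw [Finset.mul_sum]
  apply Finset.sum_congr rfl
  intro i _
  simp only [one_pow, mul_one]
  ring

include hconsec in
lemma B_pos (hφ0 : 0 ≤ φ) :
    0 < ∑ σ ∈ univ.filter
        (fun σ : Equiv.Perm (Fin n) => R x y σ = (∅ : Finset (Fin m))), φ ^ dKT π₁ σ := by
  have hmem : π₁ ∈ univ.filter
      (fun σ : Equiv.Perm (Fin n) => R x y σ = (∅ : Finset (Fin m))) := by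
    simp only [Finset.mem_filter, Finset.mem_univ, true_and]
    rw [Finset.eq_empty_iff_forall_notMem]
    intro j hj
    rw [mem_R] at hj
    have h1 := hconsec j
    rw [Fin.lt_def] at hj
    omega
  have h1 : (1 : ℝ) ≤ ∑ σ ∈ univ.filter
      (fun σ : Equiv.Perm (Fin n) => R x y σ = (∅ : Finset (Fin m))), φ ^ dKT π₁ σ := by
    have h2 := Finset.single_le_sum (f := fun σ : Equiv.Perm (Fin n) => φ ^ dKT π₁ σ)
      (fun σ _ => pow_nonneg hφ0 _) hmem
    simp only [dKT_self, pow_zero] at h2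
    exact h2
  linarith

include hdistinct hconsec in
lemma prob (hφ0 : 0 ≤ φ) (i : ℕ) :
    (∑ σ : Equiv.Perm (Fin n),
        if (Finset.univ.filter fun j : Fin m => σ (y j) < σ (x j)).card = i
        then mallows φ π₁ σ else 0)
      = (m.choose i : ℝ) * φ ^ i / (1 + φ) ^ m := by
  have hB := B_pos (π₁ := π₁) (x := x) (y := y) hconsec hφ0
  set B := ∑ σ ∈ univ.filter
      (fun σ : Equiv.Perm (Fin n) => R x y σ = (∅ : Finset (Fin m))), φ ^ dKT π₁ σ with hBdef
  have hZ : ∑ τ : Equiv.Perm (Fin n), φ ^ dKT π₁ τ = B * (1 + φ) ^ m :=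
    Z_eq hdistinct hconsec
  have hsum : (∑ σ : Equiv.Perm (Fin n),
      if (Finset.univ.filter fun j : Fin m => σ (y j) < σ (x j)).card = i
      then mallows φ π₁ σ else 0)
      = ∑ σ ∈ univ.filter (fun σ : Equiv.Perm (Fin n) => (R x y σ).card = i),
          mallows φ π₁ σ := by
    rw [Finset.sum_filter]
    rfl
  rw [hsum]
  simp only [mallows, hZ]
  rw [← Finset.sum_div, N_eq hdistinct hconsec i, ← hBdef]
  rw [mul_comm B ((1 + φ) ^ m)]
  rw [mul_div_mul_right _ _ (ne_of_gt hB)]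

end
end DPR

/-- **From the proof of Theorem 6.2 of Liu–Moitra.** Let `0 ≤ φ ≤ 1` and let `π₂` be
obtained from `π₁` by reversing `m` pairwise disjoint pairs `(x i, y i)` of elements,
each pair occupying two consecutive positions in `π₁` (and hence in `π₂`). Then
`d_TV(M(φ,π₁), M(φ,π₂)) ≥ (1/2)(Σ_{i=0}^m C(m,i)|φ^i - φ^{m-i}|)/(1+φ)^m`, and for each
`i ≤ m` the probability under `M(φ, π₁)` that a sample ranks exactly `i` of the `m`
pairs in reversed relative order is `C(m,i) φ^i/(1+φ)^m`. -/
theorem disjoint_pair_reversal (n m : ℕ) (φ : ℝ) (hφ0 : 0 ≤ φ) (hφ1 : φ ≤ 1)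
    (π₁ π₂ : Equiv.Perm (Fin n)) (x y : Fin m → Fin n)
    (hdistinct : Function.Injective (Sum.elim x y : Fin m ⊕ Fin m → Fin n))
    (hconsec : ∀ i, ((π₁ (y i) : ℕ)) = (π₁ (x i) : ℕ) + 1)
    (hswap : ∀ i, π₂ (x i) = π₁ (y i) ∧ π₂ (y i) = π₁ (x i))
    (hfix : ∀ z : Fin n, (∀ i, z ≠ x i ∧ z ≠ y i) → π₂ z = π₁ z) :
    ((1 : ℝ) / 2) *
        (∑ i ∈ Finset.range (m + 1), ((m.choose i : ℝ) * |φ ^ i - φ ^ (m - i)|)) /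
        (1 + φ) ^ m
      ≤ dTV (mallows φ π₁) (mallows φ π₂) ∧
    ∀ i ≤ m,
      (∑ σ : Equiv.Perm (Fin n),
          if (Finset.univ.filter fun j : Fin m => σ (y j) < σ (x j)).card = i
          then mallows φ π₁ σ else 0)
        = (m.choose i : ℝ) * φ ^ i / (1 + φ) ^ m := by
  classical
  have hdistinct' : Function.Injective (Sum.elim y x : Fin m ⊕ Fin m → Fin n) := by
    intro a b h
    have h2 : (Sum.elim x y : Fin m ⊕ Fin m → Fin n) a.swap = Sum.elim x y b.swap := by
      cases a <;> cases b <;> simpa using h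
    have h3 := hdistinct h2
    cases a <;> cases b <;> simp_all [Sum.swap]
  have hconsec' : ∀ i, ((π₂ (x i) : ℕ)) = (π₂ (y i) : ℕ) + 1 := by
    intro i
    rw [(hswap i).1, (hswap i).2]
    exact hconsec i
  have hP : ∀ i : ℕ, (∑ σ : Equiv.Perm (Fin n),
        if (Finset.univ.filter fun j : Fin m => σ (y j) < σ (x j)).card = i
        then mallows φ π₁ σ else 0)
      = (m.choose i : ℝ) * φ ^ i / (1 + φ) ^ m :=
    fun i => DPR.prob hdistinct hconsec hφ0 i
  have hQ' : ∀ i : ℕ, (∑ σ : Equiv.Perm (Fin n),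
        if (Finset.univ.filter fun j : Fin m => σ (x j) < σ (y j)).card = i
        then mallows φ π₂ σ else 0)
      = (m.choose i : ℝ) * φ ^ i / (1 + φ) ^ m :=
    fun i => DPR.prob hdistinct' hconsec' hφ0 i
  have hcompl : ∀ (σ : Equiv.Perm (Fin n)),
      (Finset.univ.filter fun j : Fin m => σ (x j) < σ (y j)).card
        + (Finset.univ.filter fun j : Fin m => σ (y j) < σ (x j)).card = m := by
    intro σ
    have h1 : (Finset.univ.filter fun j : Fin m => σ (x j) < σ (y j))
        = Finset.univ.filter fun j : Fin m => ¬ σ (y j) < σ (x j) := by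
      apply Finset.filter_congr
      intro j _
      have hne : σ (x j) ≠ σ (y j) := fun h => DPR.hxy hdistinct j j (σ.injective h)
      constructor
      · exact fun h => asymm h
      · exact fun h => hne.lt_or_gt.resolve_right h
    rw [h1, add_comm, Finset.card_filter_add_card_filter_not]
    simp
  have hcard_le : ∀ (σ : Equiv.Perm (Fin n)),
      (Finset.univ.filter fun j : Fin m => σ (y j) < σ (x j)).card ≤ m := by
    intro σ
    have := hcompl σ
    omega
  have hQ : ∀ i ≤ m, (∑ σ : Equiv.Perm (Fin n),
        if (Finset.univ.filter fun j : Fin m => σ (y j) < σ (x j)).card = i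
        then mallows φ π₂ σ else 0)
      = (m.choose i : ℝ) * φ ^ (m - i) / (1 + φ) ^ m := by
    intro i hi
    have h := hQ' (m - i)
    have hiff : ∀ σ : Equiv.Perm (Fin n),
        ((Finset.univ.filter fun j : Fin m => σ (x j) < σ (y j)).card = m - i)
          ↔ ((Finset.univ.filter fun j : Fin m => σ (y j) < σ (x j)).card = i) := by
      intro σ
      have := hcompl σ
      omega
    rw [Finset.sum_congr rfl (fun σ _ => by rw [if_congr (hiff σ) rfl rfl])] at h
    rw [h, Nat.choose_symm hi]
  refine ⟨?_, fun i _ => hP i⟩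
  -- part 1
  have hpow_pos : (0 : ℝ) < (1 + φ) ^ m := by positivity
  set f : Equiv.Perm (Fin n) → ℝ := fun σ => mallows φ π₁ σ - mallows φ π₂ σ with hf
  have hmaps : ∀ σ ∈ (univ : Finset (Equiv.Perm (Fin n))),
      (Finset.univ.filter fun j : Fin m => σ (y j) < σ (x j)).card ∈ Finset.range (m + 1) := by
    intro σ _
    rw [Finset.mem_range, Nat.lt_succ_iff]
    exact hcard_le σ
  have hdecomp : ∑ σ : Equiv.Perm (Fin n), |f σ|
      = ∑ i ∈ Finset.range (m + 1),
          ∑ σ ∈ univ.filter (fun σ : Equiv.Perm (Fin n) =>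
            (Finset.univ.filter fun j : Fin m => σ (y j) < σ (x j)).card = i), |f σ| :=
    (Finset.sum_fiberwise_of_maps_to hmaps _).symm
  have hclass : ∀ i ∈ Finset.range (m + 1),
      ((m.choose i : ℝ) * |φ ^ i - φ ^ (m - i)|) / (1 + φ) ^ m
        ≤ ∑ σ ∈ univ.filter (fun σ : Equiv.Perm (Fin n) =>
            (Finset.univ.filter fun j : Fin m => σ (y j) < σ (x j)).card = i), |f σ| := by
    intro i hi
    rw [Finset.mem_range, Nat.lt_succ_iff] at hi
    have hsumf : ∑ σ ∈ univ.filter (fun σ : Equiv.Perm (Fin n) =>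
          (Finset.univ.filter fun j : Fin m => σ (y j) < σ (x j)).card = i), f σ
        = (m.choose i : ℝ) * φ ^ i / (1 + φ) ^ m
          - (m.choose i : ℝ) * φ ^ (m - i) / (1 + φ) ^ m := by
      rw [hf]
      rw [Finset.sum_sub_distrib]
      rw [Finset.sum_filter, Finset.sum_filter, hP i, hQ i hi]
    have habs : |∑ σ ∈ univ.filter (fun σ : Equiv.Perm (Fin n) =>
          (Finset.univ.filter fun j : Fin m => σ (y j) < σ (x j)).card = i), f σ|
        = ((m.choose i : ℝ) * |φ ^ i - φ ^ (m - i)|) / (1 + φ) ^ m := by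
      rw [hsumf, div_sub_div_same, ← mul_sub, abs_div, abs_mul, Nat.abs_cast,
        abs_of_pos hpow_pos]
    calc ((m.choose i : ℝ) * |φ ^ i - φ ^ (m - i)|) / (1 + φ) ^ m
        = |∑ σ ∈ univ.filter (fun σ : Equiv.Perm (Fin n) =>
            (Finset.univ.filter fun j : Fin m => σ (y j) < σ (x j)).card = i), f σ| :=
          habs.symm
      _ ≤ _ := Finset.abs_sum_le_sum_abs _ _
  have hmain : (∑ i ∈ Finset.range (m + 1), ((m.choose i : ℝ) * |φ ^ i - φ ^ (m - i)|))
        / (1 + φ) ^ m ≤ ∑ σ : Equiv.Perm (Fin n), |f σ| := by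
    rw [hdecomp, Finset.sum_div]
    exact Finset.sum_le_sum hclass
  rw [dTV]
  have heq : ((1 : ℝ) / 2) *
      (∑ i ∈ Finset.range (m + 1), ((m.choose i : ℝ) * |φ ^ i - φ ^ (m - i)|)) / (1 + φ) ^ m
      = ((∑ i ∈ Finset.range (m + 1), ((m.choose i : ℝ) * |φ ^ i - φ ^ (m - i)|))
          / (1 + φ) ^ m) / 2 := by
    ring
  rw [heq]
  linarith
end
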